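/- arXiv:2408.02328 — 8 statements merged into one kernel-verified Lean document; each statement's English description precedes it below -/
import Mathlib

section
/- Let F be a field, let n ≥ 1 and d ≥ 0 be integers, and let f ∈ F[x_1,...,x_n] be a multilinear polynomial (every monomial is square-free) of degree at most d. Suppose A ⊆ F^n satisfies |A| > 2 · ∑_{0 ≤ i ≤ d/2} C(n, i). If f(a − b) = 0 for every pair a, b ∈ A with a ≠ b, then f(0) = 0. -/
/-- Croot–Lev–Pach Lemma 1: if a multilinear polynomial `f` of degree at most `d`
vanishes at all differences `a - b` of distinct elements of a large set `A`,
then `f(0) = 0`. -/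
theorem croot_lev_pach_lemma
    {F : Type*} [Field F] {n : ℕ} (hn : 1 ≤ n) (d : ℕ)
    (f : MvPolynomial (Fin n) F)
    (hml : ∀ m ∈ f.support, ∀ i : Fin n, m i ≤ 1)
    (hdeg : f.totalDegree ≤ d)
    (A : Finset (Fin n → F))
    (hA : 2 * ∑ i ∈ Finset.range (d / 2 + 1), n.choose i < A.card)
    (hvan : ∀ a ∈ A, ∀ b ∈ A, a ≠ b → MvPolynomial.eval (a - b) f = 0) :
    MvPolynomial.eval (0 : Fin n → F) f = 0 := by
  classical
  by_contra hc0
  set k := d / 2 with hk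
  -- small index type
  let σ := {S : Finset (Fin n) // S.card ≤ k}
  let ι := σ ⊕ σ
  have hσ : Fintype.card σ = ∑ i ∈ Finset.range (k + 1), n.choose i := by
    rw [Fintype.card_subtype]
    rw [Finset.card_eq_sum_card_fiberwise (f := Finset.card) (t := Finset.range (k+1))
      (fun S hS => by simp at hS ⊢; omega)]
    refine Finset.sum_congr rfl fun i hi => ?_
    rw [Finset.filter_filter]
    have he : (Finset.univ.filter fun S : Finset (Fin n) => S.card ≤ k ∧ S.card = i)
        = Finset.powersetCard i Finset.univ := by
      ext S
      simp only [Finset.mem_filter, Finset.mem_univ, true_and, Finset.mem_powersetCard,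
        Finset.subset_univ]
      have := Finset.mem_range.mp hi
      omega
    rw [he, Finset.card_powersetCard, Finset.card_univ, Fintype.card_fin]
  have hι : Fintype.card ι = 2 * ∑ i ∈ Finset.range (k + 1), n.choose i := by
    simp [ι, Fintype.card_sum, hσ]; ring
  -- degree of monomials
  have hdegm : ∀ m ∈ f.support, m.support.card ≤ d := by
    intro m hm
    have h1 : m.support.card ≤ m.sum fun _ e => e := by
      rw [Finsupp.sum]
      calc m.support.card = ∑ _i ∈ m.support, 1 := by simp
        _ ≤ ∑ i ∈ m.support, m i :=
          Finset.sum_le_sum fun i hi => Nat.one_le_iff_ne_zero.mpr (Finsupp.mem_support_iff.mp hi)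
    exact h1.trans ((MvPolynomial.le_totalDegree hm).trans hdeg)
  have heval : ∀ v : Fin n → F, MvPolynomial.eval v f
      = ∑ m ∈ f.support, f.coeff m * ∏ i ∈ m.support, v i := by
    intro v
    rw [MvPolynomial.eval_eq]
    refine Finset.sum_congr rfl fun m hm => ?_
    congr 1
    refine Finset.prod_congr rfl fun i hi => ?_
    have h1 : m i = 1 := le_antisymm (hml m hm i)
      (Nat.one_le_iff_ne_zero.mpr (Finsupp.mem_support_iff.mp hi))
    rw [h1, pow_one]
  -- the two families of functions
  let Aa : (Fin n → F) → Finset (Fin n) → F := fun v S => ∏ i ∈ S, v i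
  let Bb : (Fin n → F) → Finset (Fin n) → F := fun v S => ∏ i ∈ S, (-(v i))
  let U : (Fin n → F) → ι → F := fun a j =>
    match j with
    | Sum.inl S => Aa a S.1
    | Sum.inr T => ∑ m ∈ f.support, ∑ S ∈ m.support.powerset,
        if k < S.card ∧ m.support \ S = T.1 then f.coeff m * Aa a S else 0
  let V : (Fin n → F) → ι → F := fun b j =>
    match j with
    | Sum.inl S => ∑ m ∈ f.support,
        if S.1 ⊆ m.support then f.coeff m * Bb b (m.support \ S.1) else 0
    | Sum.inr T => Bb b T.1
  have hTcard : ∀ m ∈ f.support, ∀ S ∈ m.support.powerset, k < S.card → (m.support \ S).card ≤ k := by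
    intro m hm S hS hlt
    have h1 := hdegm m hm
    have h2 : S ⊆ m.support := Finset.mem_powerset.mp hS
    have h3 := Finset.card_le_card h2
    rw [Finset.card_sdiff_of_subset h2]
    omega
  have key : ∀ a b : Fin n → F, MvPolynomial.eval (a - b) f = ∑ j, U a j * V b j := by
    intro a b
    rw [heval]
    have hL : ∀ m ∈ f.support, f.coeff m * ∏ i ∈ m.support, (a - b) i
        = ∑ S ∈ m.support.powerset, f.coeff m * (Aa a S * Bb b (m.support \ S)) := by
      intro m _
      rw [show (∏ i ∈ m.support, (a - b) i) = ∏ i ∈ m.support, (a i + -(b i)) from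
        Finset.prod_congr rfl fun i _ => by simp [sub_eq_add_neg],
        Finset.prod_add, Finset.mul_sum]
    rw [Finset.sum_congr rfl hL, Fintype.sum_sum_type]
    have h1 : ∑ S : σ, U a (Sum.inl S) * V b (Sum.inl S)
        = ∑ m ∈ f.support, ∑ S ∈ (m.support.powerset).filter (fun S => S.card ≤ k),
            f.coeff m * (Aa a S * Bb b (m.support \ S)) := by
      have e1 : ∑ S : σ, U a (Sum.inl S) * V b (Sum.inl S)
          = ∑ S ∈ Finset.univ.filter (fun S : Finset (Fin n) => S.card ≤ k),
              ∑ m ∈ f.support,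
                (if S ⊆ m.support then f.coeff m * (Aa a S * Bb b (m.support \ S)) else 0) := by
        rw [Finset.sum_subtype (p := fun S : Finset (Fin n) => S.card ≤ k) (Finset.univ.filter (fun S : Finset (Fin n) => S.card ≤ k))
          (fun x => by simp)
          (fun S => ∑ m ∈ f.support,
            (if S ⊆ m.support then f.coeff m * (Aa a S * Bb b (m.support \ S)) else 0))]
        refine Finset.sum_congr rfl fun S _ => ?_
        show Aa a S.1 * (∑ m ∈ f.support, _) = _
        rw [Finset.mul_sum]
        refine Finset.sum_congr rfl fun m _ => ?_
        rw [mul_ite, mul_zero]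
        congr 1
        ring
      rw [e1, Finset.sum_comm]
      refine Finset.sum_congr rfl fun m _ => ?_
      rw [← Finset.sum_filter]
      refine Finset.sum_congr ?_ (fun _ _ => rfl)
      ext S
      simp only [Finset.mem_filter, Finset.mem_univ, true_and, Finset.mem_powerset]
      exact and_comm
    have h2 : ∑ T : σ, U a (Sum.inr T) * V b (Sum.inr T)
        = ∑ m ∈ f.support, ∑ S ∈ (m.support.powerset).filter (fun S => ¬ S.card ≤ k),
            f.coeff m * (Aa a S * Bb b (m.support \ S)) := by
      have e1 : ∑ T : σ, U a (Sum.inr T) * V b (Sum.inr T)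
          = ∑ T ∈ Finset.univ.filter (fun T : Finset (Fin n) => T.card ≤ k),
              ∑ m ∈ f.support, ∑ S ∈ m.support.powerset,
                (if k < S.card ∧ m.support \ S = T then f.coeff m * (Aa a S * Bb b T) else 0) := by
        rw [Finset.sum_subtype (p := fun S : Finset (Fin n) => S.card ≤ k) (Finset.univ.filter (fun T : Finset (Fin n) => T.card ≤ k))
          (fun x => by simp)
          (fun T => ∑ m ∈ f.support, ∑ S ∈ m.support.powerset,
            (if k < S.card ∧ m.support \ S = T then f.coeff m * (Aa a S * Bb b T) else 0))]
        refine Finset.sum_congr rfl fun T _ => ?_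
        show (∑ m ∈ f.support, _) * Bb b T.1 = _
        rw [Finset.sum_mul]
        refine Finset.sum_congr rfl fun m _ => ?_
        rw [Finset.sum_mul]
        refine Finset.sum_congr rfl fun S _ => ?_
        rw [ite_mul, zero_mul]
        congr 1
        ring
      rw [e1, Finset.sum_comm]
      refine Finset.sum_congr rfl fun m hm => ?_
      rw [Finset.sum_comm, Finset.sum_filter]
      refine Finset.sum_congr rfl fun S hS => ?_
      by_cases hc : k < S.card
      · simp only [hc, true_and]
        rw [Finset.sum_ite_eq]
        have hmem : m.support \ S ∈ Finset.univ.filter (fun T : Finset (Fin n) => T.card ≤ k) := by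
          simp [hTcard m hm S hS hc]
        rw [if_pos hmem, if_pos (not_le.mpr hc)]
      · simp [hc, not_lt.mp hc]
    rw [h1, h2, ← Finset.sum_add_distrib]
    refine Finset.sum_congr rfl fun m _ => ?_
    exact (Finset.sum_filter_add_sum_filter_not _ _ _).symm
  -- linear independence
  have li : LinearIndependent F (fun b : A => V b) := by
    rw [Fintype.linearIndependent_iff]
    intro g hg a
    have h1 : ∑ j, U a j * (∑ b : A, g b • V b) j = 0 := by rw [hg]; simp
    have h2 : ∑ j, U a j * (∑ b : A, g b • V b) j
        = ∑ b : A, g b * MvPolynomial.eval ((a : Fin n → F) - (b : Fin n → F)) f := by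
      simp only [Finset.sum_apply, Pi.smul_apply, smul_eq_mul, Finset.mul_sum]
      rw [Finset.sum_comm]
      refine Finset.sum_congr rfl fun b _ => ?_
      rw [key, Finset.mul_sum]
      exact Finset.sum_congr rfl fun j _ => by ring
    have h3 : ∑ b : A, g b * MvPolynomial.eval ((a : Fin n → F) - (b : Fin n → F)) f
        = g a * MvPolynomial.eval (0 : Fin n → F) f := by
      rw [Fintype.sum_eq_single a (fun b hb => ?_)]
      · rw [sub_self]
      · rw [hvan a a.2 b b.2 (fun h => hb (Subtype.coe_injective h.symm)), mul_zero]
    rw [h2, h3] at h1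
    exact (mul_eq_zero.mp h1).resolve_right hc0
  have hle := li.fintype_card_le_finrank
  rw [Fintype.card_coe, Module.finrank_pi, hι] at hle
  omega
end

section
/- Let F be a field, A a finite set, and let δ : A × A × A → F be the diagonal map, i.e. δ(x, y, z) = 1 if x = y = z and δ(x, y, z) = 0 otherwise. If δ can be written as a sum of d functions, each of one of the forms (x, y, z) ↦ g(x)·h(y, z), (x, y, z) ↦ g(y)·h(x, z), or (x, y, z) ↦ g(z)·h(x, y), then d ≥ |A|. In particular the slice rank of the diagonal map equals |A|. -/
open Module

lemma rref_aux {F : Type*} [Field F] {A : Type*} [Fintype A] [DecidableEq A] :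
    ∀ (m : ℕ) (μ : (Fin m → F) →ₗ[F] (A → F)), Function.Injective μ →
    ∃ (v : Fin m → (A → F)) (p : Fin m → A), Function.Injective p ∧
      (∀ i, v i ∈ LinearMap.range μ) ∧ (∀ i j, v i (p j) = if i = j then 1 else 0) := by
  intro m
  induction m with
  | zero =>
    intro μ _
    exact ⟨fun i => i.elim0, fun i => i.elim0, fun i => i.elim0, fun i => i.elim0,
      fun i => i.elim0⟩
  | succ m ih =>
    intro μ hμ
    -- extension by zero linear map
    set E : (Fin m → F) →ₗ[F] (Fin (m + 1) → F) :=
      LinearMap.pi (fun i => Fin.lastCases 0 (fun j : Fin m => LinearMap.proj j) i) with hE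
    have hEcast : ∀ (x : Fin m → F) (j : Fin m), E x j.castSucc = x j := by
      intro x j
      simp [hE, LinearMap.pi_apply]
    have hElast : ∀ (x : Fin m → F), E x (Fin.last m) = 0 := by
      intro x
      simp [hE, LinearMap.pi_apply]
    have hEinj : Function.Injective E := by
      intro x y hxy
      funext j
      have := congrFun hxy j.castSucc
      rwa [hEcast, hEcast] at this
    obtain ⟨v, p, hp, hv, hvp⟩ := ih (μ.comp E) (hμ.comp hEinj)
    have hrle : LinearMap.range (μ.comp E) ≤ LinearMap.range μ :=
      LinearMap.range_comp_le_range E μ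
    set w : A → F := μ (Pi.single (Fin.last m) 1) with hw
    have hwmem : w ∈ LinearMap.range μ := ⟨_, rfl⟩
    have hwnot : w ∉ LinearMap.range (μ.comp E) := by
      rintro ⟨x, hx⟩
      have : E x = Pi.single (Fin.last m) 1 := hμ hx
      have h2 := congrFun this (Fin.last m)
      rw [hElast] at h2
      simp at h2
    set w' : A → F := w - ∑ i, w (p i) • v i with hw'
    have hw'p : ∀ j, w' (p j) = 0 := by
      intro j
      simp only [hw', Pi.sub_apply, Finset.sum_apply, Pi.smul_apply, smul_eq_mul, hvp,
        mul_ite, mul_one, mul_zero]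
      rw [Finset.sum_ite_eq' Finset.univ j (fun i => w (p i))]
      simp
    have hw'ne : w' ≠ 0 := by
      intro h0
      apply hwnot
      have : w = ∑ i, w (p i) • v i := by
        have := sub_eq_zero.mp h0
        exact this
      rw [this]
      exact Submodule.sum_mem _ (fun i _ => Submodule.smul_mem _ _ (hv i))
    obtain ⟨a0, ha0⟩ : ∃ a, w' a ≠ 0 := by
      by_contra hall
      push_neg at hall
      exact hw'ne (funext hall)
    have ha0p : ∀ j, p j ≠ a0 := by
      intro j hj
      exact ha0 (hj ▸ hw'p j)
    set c : F := (w' a0)⁻¹ with hc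
    have hw'mem : w' ∈ LinearMap.range μ :=
      Submodule.sub_mem _ hwmem
        (Submodule.sum_mem _ (fun i _ => Submodule.smul_mem _ _ (hrle (hv i))))
    refine ⟨Fin.snoc (fun i => v i - v i a0 • (c • w')) (c • w'), Fin.snoc p a0, ?_, ?_, ?_⟩
    · intro i j hij
      induction i using Fin.lastCases with
      | last =>
        induction j using Fin.lastCases with
        | last => rfl
        | cast j =>
          rw [Fin.snoc_last, Fin.snoc_castSucc] at hij
          exact absurd hij.symm (ha0p j)
      | cast i =>
        induction j using Fin.lastCases with
        | last =>
          rw [Fin.snoc_last, Fin.snoc_castSucc] at hij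
          exact absurd hij (ha0p i)
        | cast j =>
          rw [Fin.snoc_castSucc, Fin.snoc_castSucc] at hij
          rw [hp hij]
    · intro i
      induction i using Fin.lastCases with
      | last =>
        rw [Fin.snoc_last]
        exact Submodule.smul_mem _ _ hw'mem
      | cast i =>
        rw [Fin.snoc_castSucc]
        exact Submodule.sub_mem _ (hrle (hv i)) (Submodule.smul_mem _ _
          (Submodule.smul_mem _ _ hw'mem))
    · intro i j
      induction i using Fin.lastCases with
      | last =>
        induction j using Fin.lastCases with
        | last =>
          rw [Fin.snoc_last, Fin.snoc_last]
          simp [Pi.smul_apply, hc, inv_mul_cancel₀ ha0]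
        | cast j =>
          rw [Fin.snoc_last, Fin.snoc_castSucc]
          have : (Fin.last m = j.castSucc) = False := by
            simp [Fin.ext_iff]
            omega
          simp [hw'p j, this]
      | cast i =>
        induction j using Fin.lastCases with
        | last =>
          rw [Fin.snoc_castSucc, Fin.snoc_last]
          have : (i.castSucc = Fin.last m) = False := by
            simp [Fin.ext_iff]
            omega
          simp [this, Pi.smul_apply, hc, inv_mul_cancel₀ ha0]
        | cast j =>
          rw [Fin.snoc_castSucc, Fin.snoc_castSucc]
          simp [hw'p j, hvp i j, Fin.castSucc_inj]

open scoped Classical in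
lemma exists_big_support {F : Type*} [Field F] {A : Type*} [Fintype A] [DecidableEq A]
    (K : Submodule F (A → F)) :
    ∃ v ∈ K, finrank F K ≤ (Finset.univ.filter (fun a => v a ≠ 0)).card := by
  set m := finrank F K with hm
  let b : Basis (Fin m) F K := Module.finBasis F K
  set μ : (Fin m → F) →ₗ[F] (A → F) := K.subtype.comp (b.equivFun.symm.toLinearMap) with hμ
  have hμinj : Function.Injective μ := by
    apply Function.Injective.comp K.injective_subtype b.equivFun.symm.injective
  have hrange : LinearMap.range μ ≤ K := by
    rintro x ⟨y, rfl⟩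
    exact (b.equivFun.symm y).2
  obtain ⟨v, p, hp, hv, hvp⟩ := rref_aux m μ hμinj
  refine ⟨∑ i, v i, Submodule.sum_mem _ (fun i _ => hrange (hv i)), ?_⟩
  have hone : ∀ j, (∑ i, v i) (p j) = 1 := by
    intro j
    simp only [Finset.sum_apply, hvp]
    rw [Finset.sum_ite_eq' Finset.univ j (fun _ => (1:F))]
    simp
  have hle := Finset.card_le_card_of_injOn (s := Finset.univ)
        (t := Finset.univ.filter (fun a => (∑ i, v i) a ≠ 0)) p
        (fun j _ => Finset.mem_filter.mpr ⟨Finset.mem_univ _, by rw [hone j]; exact one_ne_zero⟩)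
        (hp.injOn)
  simpa using hle

/-- Tao–Sawin: the slice rank of the diagonal map on `A × A × A` is `|A|`:
any decomposition of the diagonal as a sum of `d` slice functions needs `d ≥ |A|`. -/
theorem slice_rank_diagonal
    {F : Type*} [Field F] {A : Type*} [Fintype A] [DecidableEq A]
    (d : ℕ) (T : Fin d → (A × A × A → F))
    (hslice : ∀ i : Fin d,
      (∃ g : A → F, ∃ h : A × A → F, T i = fun p => g p.1 * h (p.2.1, p.2.2)) ∨
      (∃ g : A → F, ∃ h : A × A → F, T i = fun p => g p.2.1 * h (p.1, p.2.2)) ∨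
      (∃ g : A → F, ∃ h : A × A → F, T i = fun p => g p.2.2 * h (p.1, p.2.1)))
    (hsum : ∀ p : A × A × A,
      (∑ i : Fin d, T i p) = if p.1 = p.2.1 ∧ p.2.1 = p.2.2 then 1 else 0) :
    Fintype.card A ≤ d := by
  classical
  by_contra hcon
  push_neg at hcon
  -- classify the slice functions
  have hcls : ∀ i, ∃ (c : Fin 3) (g : A → F) (h : A × A → F), T i = fun p =>
      if c = 0 then g p.1 * h (p.2.1, p.2.2)
      else if c = 1 then g p.2.1 * h (p.1, p.2.2)
      else g p.2.2 * h (p.1, p.2.1) := by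
    intro i
    rcases hslice i with ⟨g, h, hi⟩ | ⟨g, h, hi⟩ | ⟨g, h, hi⟩
    · exact ⟨0, g, h, by simpa using hi⟩
    · exact ⟨1, g, h, by simpa using hi⟩
    · exact ⟨2, g, h, by simpa using hi⟩
  choose c g h hT using hcls
  set I1 : Finset (Fin d) := Finset.univ.filter (fun i => c i = 0) with hI1
  set I2 : Finset (Fin d) := Finset.univ.filter (fun i => c i = 1) with hI2
  set I3 : Finset (Fin d) := Finset.univ.filter (fun i => c i = 2) with hI3
  have hdisj12 : Disjoint I1 I2 := by
    rw [Finset.disjoint_left]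
    intro a ha1 ha2
    rw [hI1, Finset.mem_filter] at ha1
    rw [hI2, Finset.mem_filter] at ha2
    rw [ha1.2] at ha2
    exact absurd ha2.2 (by decide)
  have hdisj13 : Disjoint (I1 ∪ I2) I3 := by
    rw [Finset.disjoint_left]
    intro a ha1 ha2
    rw [hI3, Finset.mem_filter] at ha2
    rcases Finset.mem_union.mp ha1 with ha | ha
    · rw [hI1, Finset.mem_filter] at ha; rw [ha.2] at ha2; exact absurd ha2.2 (by decide)
    · rw [hI2, Finset.mem_filter] at ha; rw [ha.2] at ha2; exact absurd ha2.2 (by decide)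
  have hunion : (Finset.univ : Finset (Fin d)) = I1 ∪ I2 ∪ I3 := by
    ext i
    simp only [Finset.mem_univ, true_iff, Finset.mem_union, hI1, hI2, hI3, Finset.mem_filter,
      Finset.mem_univ, true_and]
    have : c i = 0 ∨ c i = 1 ∨ c i = 2 := by omega
    tauto
  have hcard : I1.card + I2.card + I3.card = d := by
    have := Finset.card_union_of_disjoint hdisj13
    rw [← hunion] at this
    rw [Finset.card_union_of_disjoint hdisj12] at this
    simpa using this.symm
  -- the functional map
  set φ : (A → F) →ₗ[F] (↥I1 → F) :=
    { toFun := fun v i => ∑ x, v x * g i.1 x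
      map_add' := by
        intro u v; funext i; simp [add_mul, Finset.sum_add_distrib]
      map_smul' := by
        intro a v; funext i; simp [Finset.mul_sum, mul_assoc] } with hφ
  set K := LinearMap.ker φ with hKdef
  have hK : (I2.card + I3.card) + 1 ≤ finrank F K := by
    rw [hKdef]
    have h1 := LinearMap.finrank_range_add_finrank_ker φ
    have h2 : finrank F (A → F) = Fintype.card A := Module.finrank_fintype_fun_eq_card F
    have h3 : finrank F (LinearMap.range φ) ≤ I1.card := by
      have h4 := Submodule.finrank_le (LinearMap.range φ)
      rwa [Module.finrank_fintype_fun_eq_card, Fintype.card_coe] at h4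
    omega
  obtain ⟨v, hvK, hvsupp⟩ := exists_big_support K
  set S : Finset A := Finset.univ.filter (fun a => v a ≠ 0) with hS
  have hScard : I2.card + I3.card + 1 ≤ S.card := le_trans hK hvsupp
  have hker : ∀ i ∈ I1, ∑ x, v x * g i x = 0 := by
    intro i hi
    have h0 : φ v = 0 := hvK
    exact congrFun h0 ⟨i, hi⟩
  -- the key identity
  have key : ∀ y z : A, (if y = z then v y else 0) =
      (∑ i ∈ I2, g i y * (∑ x, v x * h i (x, z))) +
      ∑ i ∈ I3, (∑ x, v x * h i (x, y)) * g i z := by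
    intro y z
    have h0 : ∑ x, v x * (∑ i, T i (x, y, z)) = ∑ x, v x * (if x = y ∧ y = z then 1 else 0) :=
      Finset.sum_congr rfl fun x _ => by rw [hsum (x, y, z)]
    have hR : ∑ x, v x * (if x = y ∧ y = z then 1 else 0) = (if y = z then v y else 0) := by
      by_cases hyz : y = z
      · simp [hyz]
      · simp [hyz]
    have hL : ∑ x, v x * (∑ i, T i (x, y, z)) = ∑ i, ∑ x, v x * T i (x, y, z) := by
      simp_rw [Finset.mul_sum]
      exact Finset.sum_comm
    have e1 : ∑ i ∈ I1, ∑ x, v x * T i (x, y, z) = 0 := by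
      refine Finset.sum_eq_zero fun i hi => ?_
      have hc : c i = 0 := by rw [hI1, Finset.mem_filter] at hi; exact hi.2
      have hterm : ∀ x, v x * T i (x, y, z) = (v x * g i x) * h i (y, z) := by
        intro x
        simp only [hT i, hc, if_true, eq_self_iff_true]
        ring
      rw [Finset.sum_congr rfl fun x _ => hterm x, ← Finset.sum_mul, hker i hi, zero_mul]
    have e2 : ∑ i ∈ I2, ∑ x, v x * T i (x, y, z)
        = ∑ i ∈ I2, g i y * (∑ x, v x * h i (x, z)) := by
      refine Finset.sum_congr rfl fun i hi => ?_
      have hc : c i = 1 := by rw [hI2, Finset.mem_filter] at hi; exact hi.2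
      rw [Finset.mul_sum]
      refine Finset.sum_congr rfl fun x _ => ?_
      simp only [hT i, hc, (by decide : ¬ ((1 : Fin 3) = 0)), if_true, if_false,
        eq_self_iff_true]
      ring
    have e3 : ∑ i ∈ I3, ∑ x, v x * T i (x, y, z)
        = ∑ i ∈ I3, (∑ x, v x * h i (x, y)) * g i z := by
      refine Finset.sum_congr rfl fun i hi => ?_
      have hc : c i = 2 := by rw [hI3, Finset.mem_filter] at hi; exact hi.2
      rw [Finset.sum_mul]
      refine Finset.sum_congr rfl fun x _ => ?_
      simp only [hT i, hc, (by decide : ¬ ((2 : Fin 3) = 0)), (by decide : ¬ ((2 : Fin 3) = 1)),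
        if_true, if_false, eq_self_iff_true]
      ring
    calc (if y = z then v y else 0)
        = ∑ x, v x * (if x = y ∧ y = z then 1 else 0) := hR.symm
      _ = ∑ i, ∑ x, v x * T i (x, y, z) := by rw [← h0, hL]
      _ = ∑ i ∈ I1 ∪ I2 ∪ I3, ∑ x, v x * T i (x, y, z) := by rw [← hunion]
      _ = _ := by
          rw [Finset.sum_union hdisj13, Finset.sum_union hdisj12, e1, e2, e3, zero_add]
  -- the span
  set u : (↥I2 ⊕ ↥I3) → (A → F) :=
    Sum.elim (fun i => fun z => ∑ x, v x * h i.1 (x, z)) (fun i => fun z => g i.1 z) with hu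
  set W : Submodule F (A → F) := Submodule.span F (Set.range u) with hW
  have hWrank : finrank F W ≤ I2.card + I3.card := by
    have h5 : (Set.range u).finrank F ≤ Fintype.card (↥I2 ⊕ ↥I3) := finrank_range_le_card u
    rwa [Fintype.card_sum, Fintype.card_coe, Fintype.card_coe] at h5
  have hmem : ∀ y : ↥S, (fun z => if (y : A) = z then v y else 0) ∈ W := by
    intro y
    have heq : (fun z => if (y : A) = z then v (y : A) else 0)
        = (∑ i ∈ I2.attach, g i.1 (y : A) • u (Sum.inl i))
          + ∑ i ∈ I3.attach, (∑ x, v x * h i.1 (x, (y : A))) • u (Sum.inr i) := by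
      funext z
      simp only [Pi.add_apply, Finset.sum_apply, Pi.smul_apply, smul_eq_mul, hu, Sum.elim_inl,
        Sum.elim_inr]
      rw [Finset.sum_attach I2 (fun i => g i (y : A) * ∑ x, v x * h i (x, z)),
        Finset.sum_attach I3 (fun i => (∑ x, v x * h i (x, (y : A))) * g i z)]
      exact key y z
    rw [heq]
    exact Submodule.add_mem _
      (Submodule.sum_mem _ fun i _ =>
        Submodule.smul_mem _ _ (Submodule.subset_span ⟨Sum.inl i, rfl⟩))
      (Submodule.sum_mem _ fun i _ =>
        Submodule.smul_mem _ _ (Submodule.subset_span ⟨Sum.inr i, rfl⟩))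
  -- independence
  have hbase : LinearIndependent F (fun y : ↥S => (Pi.single (y : A) (1 : F) : A → F)) := by
    have h6 : LinearIndependent F (fun a : A => (Pi.single a (1 : F) : A → F)) := by
      have hli := (Pi.basisFun F A).linearIndependent
      have hfe : ⇑(Pi.basisFun F A) = fun a : A => (Pi.single a (1 : F) : A → F) :=
        funext fun a => by simp
      rwa [hfe] at hli
    exact h6.comp Subtype.val Subtype.val_injective
  have hvy : ∀ y : ↥S, v (y : A) ≠ 0 := fun y =>
    (Finset.mem_filter.mp y.2).2
  have hind : LinearIndependent F (fun y : ↥S => (fun z => if (y : A) = z then v (y : A) else 0)) := by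
    have h7 := hbase.units_smul (fun y => Units.mk0 (v (y : A)) (hvy y))
    convert h7 using 1
    funext y
    funext z
    rcases eq_or_ne (y : A) z with hzy | hzy
    · subst hzy
      simp [Pi.smul_apply', Pi.single_apply, Units.smul_def]
    · simp [Pi.smul_apply', Pi.single_apply, Units.smul_def, hzy, Ne.symm hzy]
  set uW : ↥S → ↥W := fun y => ⟨_, hmem y⟩ with huW
  have hindW : LinearIndependent F uW := LinearIndependent.of_comp W.subtype hind
  have hfin : Fintype.card ↥S ≤ finrank F W := hindW.fintype_card_le_finrank
  rw [Fintype.card_coe] at hfin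
  omega
end

section
/- Let F be a field and f(x_1,...,x_n) ∈ F[x_1,...,x_n]. Suppose deg(f) = t_1 + t_2 + ... + t_n, where each t_i is a non-negative integer, and suppose the coefficient of the monomial x_1^{t_1} · x_2^{t_2} ⋯ x_n^{t_n} in f is nonzero. Then for any subsets S_1,...,S_n of F with |S_i| ≥ t_i + 1 for each i, there exist s_1 ∈ S_1, s_2 ∈ S_2, ..., s_n ∈ S_n such that f(s_1,...,s_n) ≠ 0. -/
open Polynomial Finset

lemma lagrange_coeff_top {F : Type*} [Field F] [DecidableEq F] (S : Finset F) {i : F} (hi : i ∈ S) :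
    (Lagrange.basis S id i).coeff (S.card - 1) = (∏ y ∈ S.erase i, (i - y))⁻¹ := by
  have hinj : Set.InjOn (id : F → F) S := Function.injective_id.injOn
  have hd := Lagrange.natDegree_basis hinj hi
  have hb := Lagrange.basis_ne_zero hinj hi
  rw [← hd, ← leadingCoeff]
  unfold Lagrange.basis
  rw [leadingCoeff_prod]
  rw [← prod_inv_distrib]
  refine Finset.prod_congr rfl fun j hj => ?_
  have hij : (i : F) ≠ j := (Finset.ne_of_mem_erase hj).symm
  rw [Lagrange.basisDivisor]
  simp [leadingCoeff_mul, hij]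

lemma one_var_sum {F : Type*} [Field F] [DecidableEq F] (S : Finset F) (e : ℕ) (he : e < S.card) :
    ∑ x ∈ S, x ^ e * (∏ y ∈ S.erase x, (x - y))⁻¹
      = if e = S.card - 1 then 1 else 0 := by
  have hinj : Set.InjOn (id : F → F) S := Function.injective_id.injOn
  have hdeg : (X ^ e : F[X]).degree < S.card := by
    simpa [degree_X_pow] using (by exact_mod_cast he : (e : WithBot ℕ) < S.card)
  have h := Lagrange.eq_interpolate hinj hdeg
  have := congrArg (fun p => p.coeff (S.card - 1)) h
  simp only [Lagrange.interpolate_apply, Polynomial.finset_sum_coeff, coeff_X_pow,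
    Polynomial.coeff_smul, smul_eq_mul, coeff_C_mul, eval_pow, eval_X, id] at this
  rw [eq_comm]
  calc (if e = S.card - 1 then (1:F) else 0)
      = ∑ x ∈ S, x ^ e * (Lagrange.basis S id x).coeff (S.card - 1) := by
        rw [← this]; simp [eq_comm]
    _ = _ := Finset.sum_congr rfl fun x hx => by rw [lagrange_coeff_top S hx]

/-- Alon's Combinatorial Nullstellensatz. -/
theorem combinatorial_nullstellensatz
    {F : Type*} [Field F] {n : ℕ}
    (f : MvPolynomial (Fin n) F) (t : Fin n →₀ ℕ)
    (hdeg : f.totalDegree = ∑ i : Fin n, t i)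
    (hcoeff : MvPolynomial.coeff t f ≠ 0)
    (S : Fin n → Finset F) (hS : ∀ i : Fin n, t i + 1 ≤ (S i).card) :
    ∃ s : Fin n → F, (∀ i : Fin n, s i ∈ S i) ∧ MvPolynomial.eval s f ≠ 0 := by
  classical
  choose T hTS hTcard using fun i => Finset.exists_subset_card_eq (hS i)
  set w : Fin n → F → F := fun i x => (∏ y ∈ (T i).erase x, (x - y))⁻¹ with hw
  have key : ∑ s ∈ Fintype.piFinset T, MvPolynomial.eval s f * ∏ i, w i (s i)
      = MvPolynomial.coeff t f := by
    calc ∑ s ∈ Fintype.piFinset T, MvPolynomial.eval s f * ∏ i, w i (s i)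
        = ∑ s ∈ Fintype.piFinset T, ∑ e ∈ f.support,
            MvPolynomial.coeff e f * ∏ i, (s i ^ e i * w i (s i)) := by
          refine Finset.sum_congr rfl fun s _ => ?_
          rw [MvPolynomial.eval_eq', Finset.sum_mul]
          refine Finset.sum_congr rfl fun e _ => ?_
          rw [mul_assoc, ← Finset.prod_mul_distrib]
      _ = ∑ e ∈ f.support, MvPolynomial.coeff e f *
            ∑ s ∈ Fintype.piFinset T, ∏ i, (s i ^ e i * w i (s i)) := by
          rw [Finset.sum_comm]
          exact Finset.sum_congr rfl fun e _ => by rw [Finset.mul_sum]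
      _ = ∑ e ∈ f.support, MvPolynomial.coeff e f *
            ∏ i, ∑ x ∈ T i, x ^ e i * w i x := by
          refine Finset.sum_congr rfl fun e _ => ?_
          rw [Finset.prod_univ_sum]
      _ = ∑ e ∈ f.support, MvPolynomial.coeff e f * (if e = t then 1 else 0) := by
          refine Finset.sum_congr rfl fun e he => ?_
          congr 1
          have hle : ∑ i, e i ≤ ∑ i, t i := by
            rw [← hdeg]
            have := MvPolynomial.le_totalDegree he
            rwa [Finsupp.sum_fintype _ _ (fun _ => rfl)] at this
          by_cases het : e = t
          · subst het
            simp only [if_pos rfl]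
            refine Finset.prod_eq_one fun i _ => ?_
            rw [one_var_sum (T i) (e i) (by rw [hTcard]; omega)]
            rw [hTcard]; simp
          · rw [if_neg het]
            have : ∃ j, e j < t j := by
              by_contra hc
              push_neg at hc
              rcases DFunLike.ne_iff.mp het with ⟨j, hj⟩
              have : ∑ i, t i < ∑ i, e i :=
                Finset.sum_lt_sum (fun i _ => hc i) ⟨j, Finset.mem_univ j, lt_of_le_of_ne (hc j) (Ne.symm hj)⟩
              omega
            obtain ⟨j, hj⟩ := this
            refine Finset.prod_eq_zero (Finset.mem_univ j) ?_
            rw [one_var_sum (T j) (e j) (by rw [hTcard]; omega)]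
            rw [hTcard]
            simp only [Nat.add_sub_cancel]
            exact if_neg (by omega)
      _ = MvPolynomial.coeff t f := by
          simp [mul_ite, Finset.sum_ite_eq' f.support t,
            MvPolynomial.mem_support_iff.mpr hcoeff]
  obtain ⟨s, hs, hne⟩ := Finset.exists_ne_zero_of_sum_ne_zero (key ▸ hcoeff)
  exact ⟨s, fun i => hTS i (Fintype.mem_piFinset.mp hs i),
    fun h => hne (by rw [h, zero_mul])⟩
end

section
/- For every prime p ≥ 3 there exist a constant c_p with 0 < c_p < 1 and a constant C_p > 0 such that for all n ≥ 1, any subset S ⊆ 𝔽_p^n containing no three-term arithmetic progression satisfies |S| ≤ C_p · p^{c_p · n}. -/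
set_option linter.unusedSectionVars false
set_option linter.unusedVariables false
set_option maxHeartbeats 1000000

open Finset MvPolynomial Module

/-- In a subspace of functions on a finite set over a finite field, there is an element
whose support is at least the dimension. -/
lemma exists_large_support {F : Type*} [Field F] [Fintype F] [DecidableEq F]
    {X : Type*} [Fintype X] (W : Submodule F (X → F)) :
    ∃ P ∈ W, finrank F W ≤ (Finset.univ.filter fun x => P x ≠ 0).card := by
  classical
  -- maximize support size
  have hne : (Finset.univ.filter fun P : X → F => P ∈ W).Nonempty :=
    ⟨0, by simp [W.zero_mem]⟩
  obtain ⟨P, hPmem, hPmax⟩ := Finset.exists_max_image _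
    (fun P : X → F => (Finset.univ.filter fun x => P x ≠ 0).card) hne
  rw [Finset.mem_filter] at hPmem
  refine ⟨P, hPmem.2, ?_⟩
  by_contra hlt
  push_neg at hlt
  set T : Finset X := Finset.univ.filter fun x => P x ≠ 0 with hT
  -- restriction to T is not injective
  set ρ : ↥W →ₗ[F] (↥T → F) :=
    (LinearMap.funLeft F F (Subtype.val : ↥T → X)).comp W.subtype with hρ
  have hnotinj : ¬ Function.Injective ρ := by
    intro hinj
    have := LinearMap.finrank_le_finrank_of_injective hinj
    rw [Module.finrank_pi] at this
    simp only [Fintype.card_coe] at this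
    omega
  -- get a nonzero element of the kernel
  have hker : LinearMap.ker ρ ≠ ⊥ := fun h => hnotinj (LinearMap.ker_eq_bot.1 h)
  obtain ⟨Q', hQ'mem, hQ'ne⟩ := Submodule.exists_mem_ne_zero_of_ne_bot hker
  set Q : X → F := (Q' : X → F) with hQ
  have hQW : Q ∈ W := Q'.2
  have hQne : Q ≠ 0 := fun h => hQ'ne (Subtype.ext h)
  have hQT : ∀ x ∈ T, Q x = 0 := by
    intro x hx
    have := LinearMap.mem_ker.1 hQ'mem
    have := congrFun this ⟨x, hx⟩
    simpa [hρ, LinearMap.funLeft] using this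
  obtain ⟨x₀, hx₀⟩ : ∃ x₀, Q x₀ ≠ 0 := by
    by_contra h; push_neg at h; exact hQne (funext h)
  have hx₀T : x₀ ∉ T := fun h => hx₀ (hQT x₀ h)
  have hPx₀ : P x₀ = 0 := by
    by_contra h; exact hx₀T (by simp [hT, h])
  -- P + Q has strictly larger support
  have hsub : insert x₀ T ⊆ Finset.univ.filter fun x => (P + Q) x ≠ 0 := by
    intro x hx
    rcases Finset.mem_insert.1 hx with rfl | hxT
    · simp [hPx₀, hx₀]
    · have h1 : P x ≠ 0 := (Finset.mem_filter.1 hxT).2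
      have h2 : Q x = 0 := hQT x hxT
      simp [h2, h1]
  have hcard : T.card + 1 ≤ (Finset.univ.filter fun x => (P + Q) x ≠ 0).card := by
    have := Finset.card_le_card hsub
    rwa [Finset.card_insert_of_notMem hx₀T] at this
  have hmax := hPmax (P + Q) (by simp [W.add_mem hPmem.2 hQW])
  omega

namespace EGaux

variable (p n : ℕ) [Fact p.Prime]

def Box : Finset (Fin n → ℕ) := Fintype.piFinset fun _ => Finset.range p
def deg (a : Fin n → ℕ) : ℕ := ∑ i, a i
def Dset (t : ℕ) : Finset (Fin n → ℕ) := (Box p n).filter fun a => deg n a ≤ t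
def chi (a : Fin n → ℕ) : (Fin n → ZMod p) → ZMod p := fun x => ∏ i, x i ^ a i

lemma mem_Box_iff {a : Fin n → ℕ} : a ∈ Box p n ↔ ∀ i, a i ≤ p - 1 := by
  have hp1 : 1 ≤ p := (Fact.out : p.Prime).one_lt.le
  simp only [Box, Fintype.mem_piFinset, Finset.mem_range]
  exact forall_congr' fun i => by omega

lemma Dset_subset_Box (t : ℕ) : Dset p n t ⊆ Box p n := Finset.filter_subset _ _

lemma Dset_mono {s t : ℕ} (h : s ≤ t) : Dset p n s ⊆ Dset p n t := by
  simp only [Dset]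
  exact Finset.monotone_filter_right _ (fun a _ ha => le_trans ha h)

/-- the monomial in `MvPolynomial` corresponding to an exponent vector -/
noncomputable def mono (a : Fin n → ℕ) : MvPolynomial (Fin n) (ZMod p) :=
  MvPolynomial.monomial (Finsupp.equivFunOnFinite.symm a) 1

lemma evall_mono (a : Fin n → ℕ) :
    MvPolynomial.evalₗ (ZMod p) (Fin n) (mono p n a) = chi p n a := by
  funext x
  simp only [evalₗ_apply, mono, eval_monomial, one_mul, chi]
  rw [Finsupp.prod_fintype]
  · simp
  · intro i; exact pow_zero _

lemma mono_mem (a : Fin n → ℕ) (ha : a ∈ Box p n) :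
    mono p n a ∈ restrictDegree (Fin n) (ZMod p) (Fintype.card (ZMod p) - 1) := by
  rw [MvPolynomial.mem_restrictDegree]
  intro s hs i
  rw [mono, MvPolynomial.support_monomial, if_neg (one_ne_zero)] at hs
  rw [Finset.mem_singleton] at hs
  subst hs
  have := (mem_Box_iff p n).1 ha i
  simpa [ZMod.card] using this

lemma evali_injective : Function.Injective (evalᵢ (Fin n) (ZMod p)) := by
  have hsurj : Function.Surjective (evalᵢ (Fin n) (ZMod p)) := by
    intro f
    have hf : f ∈ (restrictDegree (Fin n) (ZMod p) (Fintype.card (ZMod p) - 1)).map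
        (evalₗ (ZMod p) (Fin n)) := by rw [map_restrict_dom_evalₗ]; trivial
    obtain ⟨q, hq, rfl⟩ := Submodule.mem_map.1 hf
    exact ⟨⟨q, hq⟩, rfl⟩
  have hrank := MvPolynomial.rank_R (Fin n) (ZMod p)
  have hrank' : Module.rank (ZMod p) (R (Fin n) (ZMod p))
      = (Fintype.card (Fin n → ZMod p) : Cardinal) := by
    rw [hrank]
    exact_mod_cast congrArg _ (Subsingleton.elim _ _)
  have hfin : Module.finrank (ZMod p) (R (Fin n) (ZMod p))
      = Fintype.card (Fin n → ZMod p) := finrank_eq_of_rank_eq hrank'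
  have : FiniteDimensional (ZMod p) (R (Fin n) (ZMod p)) :=
    Module.finite_of_rank_eq_nat hrank'
  have heq : Module.finrank (ZMod p) (R (Fin n) (ZMod p))
      = Module.finrank (ZMod p) ((Fin n → ZMod p) → ZMod p) := by
    rw [hfin, Module.finrank_pi]
  exact (LinearMap.injective_iff_surjective_of_finrank_eq_finrank heq).2 hsurj

/-- linear independence of the monomial functions indexed by the box -/
lemma chi_indep : LinearIndependent (ZMod p) (fun a : ↥(Box p n) => chi p n ↑a) := by
  -- family in R
  have hmem : ∀ a : ↥(Box p n),
      mono p n ↑a ∈ restrictDegree (Fin n) (ZMod p) (Fintype.card (ZMod p) - 1) :=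
    fun a => mono_mem p n a a.2
  set v : ↥(Box p n) → R (Fin n) (ZMod p) := fun a => ⟨mono p n ↑a, hmem a⟩ with hv
  have hvind : LinearIndependent (ZMod p) v := by
    apply LinearIndependent.of_comp
      ((restrictDegree (Fin n) (ZMod p) (Fintype.card (ZMod p) - 1)).subtype)
    have : ((restrictDegree (Fin n) (ZMod p) (Fintype.card (ZMod p) - 1)).subtype ∘ v)
        = fun a : ↥(Box p n) => mono p n ↑a := rfl
    rw [this]
    have hbase := (MvPolynomial.basisMonomials (Fin n) (ZMod p)).linearIndependent
    have : (fun a : ↥(Box p n) => mono p n ↑a)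
        = (MvPolynomial.basisMonomials (Fin n) (ZMod p))
          ∘ (fun a : ↥(Box p n) => Finsupp.equivFunOnFinite.symm ↑a) := by
      funext a; simp [mono]
    rw [this]
    apply hbase.comp
    intro a b hab
    apply Subtype.ext
    have := Finsupp.equivFunOnFinite.symm.injective hab
    exact this
  have : (fun a : ↥(Box p n) => chi p n ↑a) = (evalᵢ (Fin n) (ZMod p)) ∘ v := by
    funext a
    have : evalᵢ (Fin n) (ZMod p) (v a) = evalₗ (ZMod p) (Fin n) (mono p n ↑a) := rfl
    rw [Function.comp_apply, this, evall_mono]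
  rw [this]
  exact hvind.map' _ (LinearMap.ker_eq_bot.2 (evali_injective p n))

-- multibinomial expansion of a monomial at a sum
lemma chi_add (a : Fin n → ℕ) (x y : Fin n → ZMod p) :
    chi p n a (x + y) =
      ∑ b ∈ Fintype.piFinset (fun i => Finset.range (a i + 1)),
        ((∏ i, ((a i).choose (b i) : ZMod p)) * (chi p n b x * chi p n (a - b) y)) := by
  have h1 : chi p n a (x + y) = ∏ i,
      ∑ j ∈ Finset.range (a i + 1),
        (x i ^ j * y i ^ (a i - j) * ((a i).choose j : ZMod p)) := by
    simp only [chi, Pi.add_apply]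
    exact Finset.prod_congr rfl fun i _ => add_pow (x i) (y i) (a i)
  rw [h1, Finset.prod_univ_sum]
  apply Finset.sum_congr rfl
  intro b _
  rw [Finset.prod_mul_distrib, Finset.prod_mul_distrib]
  simp only [chi, Pi.sub_apply]
  ring

end EGaux

namespace EGaux2
open EGaux

variable (p n : ℕ) [Fact p.Prime]

attribute [local instance] Classical.propDecidable

noncomputable def binomF (a b : Fin n → ℕ) : ZMod p := ∏ i, ((a i).choose (b i) : ZMod p)

lemma mem_piFinset_iff_le (a b : Fin n → ℕ) :
    b ∈ Fintype.piFinset (fun i => Finset.range (a i + 1)) ↔ b ≤ a := by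
  simp [Fintype.mem_piFinset, Pi.le_def, Nat.lt_succ_iff]

lemma mem_Dset_iff {t : ℕ} {b : Fin n → ℕ} :
    b ∈ Dset p n t ↔ (∀ i, b i ≤ p - 1) ∧ deg n b ≤ t := by
  simp [Dset, Finset.mem_filter, mem_Box_iff]

lemma deg_sub {a b : Fin n → ℕ} (h : b ≤ a) : deg n (a - b) = deg n a - deg n b := by
  simp only [deg, Pi.sub_apply]
  exact Finset.sum_tsub_distrib _ fun i _ => h i

lemma deg_le_deg {a b : Fin n → ℕ} (h : b ≤ a) : deg n b ≤ deg n a :=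
  Finset.sum_le_sum fun i _ => h i

lemma sub_sub_cancel {a b : Fin n → ℕ} (h : b ≤ a) : a - (a - b) = b := by
  funext i
  have hi : b i ≤ a i := h i
  simp only [Pi.sub_apply]
  omega

lemma sub_le_self' (a b : Fin n → ℕ) : a - b ≤ a := fun i => Nat.sub_le _ _

lemma monomial_split {d m : ℕ} (hd : d ≤ 2 * m + 1) (a : Fin n → ℕ) (ha : a ∈ Dset p n d)
    (x y : Fin n → ZMod p) :
    chi p n a (x + y) =
      (∑ b ∈ Dset p n m, if b ≤ a then
          binomF p n a b * (chi p n b x * chi p n (a - b) y) else 0)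
      + ∑ c ∈ Dset p n m, if c ≤ a ∧ m < deg n (a - c) then
          binomF p n a (a - c) * (chi p n (a - c) x * chi p n c y) else 0 := by
  rw [mem_Dset_iff] at ha
  obtain ⟨haB, had⟩ := ha
  rw [chi_add]
  rw [← Finset.sum_filter_add_sum_filter_not
    (Fintype.piFinset (fun i => Finset.range (a i + 1))) (fun b => deg n b ≤ m)]
  congr 1
  · -- low-degree-in-x part
    rw [← Finset.sum_filter]
    refine Finset.sum_congr ?_ ?_
    · ext b
      rw [Finset.mem_filter, Finset.mem_filter, mem_piFinset_iff_le, mem_Dset_iff]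
      constructor
      · rintro ⟨hba, hm⟩
        exact ⟨⟨fun i => le_trans (hba i) (haB i), hm⟩, hba⟩
      · rintro ⟨⟨_, hm⟩, hba⟩
        exact ⟨hba, hm⟩
    · intro b _
      unfold binomF; ring
  · -- high-degree-in-x part: reindex by c = a - b
    rw [← Finset.sum_filter]
    apply Finset.sum_nbij' (i := fun b => a - b) (j := fun c => a - c)
    · intro b hb
      rw [Finset.mem_filter, mem_piFinset_iff_le] at hb
      obtain ⟨hba, hm⟩ := hb
      have hdeg : deg n (a - b) ≤ m := by
        have h1 := deg_sub n (a := a) (b := b) hba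
        have h3 := deg_le_deg n (a := a) (b := b) hba
        omega
      rw [Finset.mem_filter, mem_Dset_iff]
      refine ⟨⟨fun i => le_trans (Nat.sub_le _ _) (haB i), hdeg⟩, sub_le_self' n a b, ?_⟩
      rw [sub_sub_cancel n hba]
      omega
    · intro c hc
      rw [Finset.mem_filter, mem_Dset_iff] at hc
      obtain ⟨_, hca, hm⟩ := hc
      rw [Finset.mem_filter, mem_piFinset_iff_le]
      exact ⟨sub_le_self' n a c, by omega⟩
    · intro b hb
      rw [Finset.mem_filter, mem_piFinset_iff_le] at hb
      exact sub_sub_cancel n hb.1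
    · intro c hc
      rw [Finset.mem_filter, mem_Dset_iff] at hc
      exact sub_sub_cancel n hc.2.1
    · intro b hb
      rw [Finset.mem_filter, mem_piFinset_iff_le] at hb
      rw [sub_sub_cancel n hb.1]
      unfold binomF; ring

lemma span_decomp {d m : ℕ} (hd : d ≤ 2 * m + 1) (P : (Fin n → ZMod p) → ZMod p)
    (hP : P ∈ Submodule.span (ZMod p) (Set.range fun a : ↥(Dset p n d) => chi p n ↑a)) :
    ∃ f g : (Fin n → ℕ) → (Fin n → ZMod p) → ZMod p, ∀ x y,
      P (x + y) = (∑ b ∈ Dset p n m, chi p n b x * f b y)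
        + ∑ c ∈ Dset p n m, g c x * chi p n c y := by
  rw [Submodule.mem_span_range_iff_exists_fun] at hP
  obtain ⟨coeff, hco⟩ := hP
  set co : (Fin n → ℕ) → ZMod p :=
    fun a => if h : a ∈ Dset p n d then coeff ⟨a, h⟩ else 0 with hcodef
  have hP' : ∀ z, P z = ∑ a ∈ Dset p n d, co a * chi p n a z := by
    intro z
    have h1 := congrFun hco.symm z
    rw [h1, Finset.sum_apply]
    rw [← Finset.sum_attach (Dset p n d) (fun a => co a * chi p n a z)]
    rw [Finset.univ_eq_attach]
    apply Finset.sum_congr rfl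
    intro a _
    simp [hcodef, a.2]
  refine ⟨fun b y => ∑ a ∈ Dset p n d, if b ≤ a then
      co a * binomF p n a b * chi p n (a - b) y else 0,
    fun c x => ∑ a ∈ Dset p n d, if c ≤ a ∧ m < deg n (a - c) then
      co a * binomF p n a (a - c) * chi p n (a - c) x else 0, ?_⟩
  intro x y
  rw [hP']
  have hsplit : ∀ a ∈ Dset p n d, co a * chi p n a (x + y)
      = (∑ b ∈ Dset p n m, if b ≤ a then
            chi p n b x * (co a * binomF p n a b * chi p n (a - b) y) else 0)
        + ∑ c ∈ Dset p n m, if c ≤ a ∧ m < deg n (a - c) then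
            (co a * binomF p n a (a - c) * chi p n (a - c) x) * chi p n c y else 0 := by
    intro a ha
    rw [monomial_split p n hd a ha x y, mul_add, Finset.mul_sum, Finset.mul_sum]
    congr 1
    · apply Finset.sum_congr rfl
      intro b _
      by_cases hb : b ≤ a
      · simp only [if_pos hb]; ring
      · simp only [if_neg hb, mul_zero]
    · apply Finset.sum_congr rfl
      intro c _
      by_cases hc : c ≤ a ∧ m < deg n (a - c)
      · simp only [if_pos hc]; ring
      · simp only [if_neg hc, mul_zero]
  rw [Finset.sum_congr rfl hsplit, Finset.sum_add_distrib]
  congr 1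
  · rw [Finset.sum_comm]
    apply Finset.sum_congr rfl
    intro b _
    rw [Finset.mul_sum]
    apply Finset.sum_congr rfl
    intro a _
    by_cases hb : b ≤ a
    · simp only [if_pos hb]
    · simp only [if_neg hb, mul_zero]
  · rw [Finset.sum_comm]
    apply Finset.sum_congr rfl
    intro c _
    rw [Finset.sum_mul]
    apply Finset.sum_congr rfl
    intro a _
    by_cases hc : c ≤ a ∧ m < deg n (a - c)
    · simp only [if_pos hc]
    · simp only [if_neg hc, zero_mul]

theorem key_bound (hp3 : 3 ≤ p) (S : Finset (Fin n → ZMod p))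
    (hS : ∀ x ∈ S, ∀ y ∈ S, ∀ z ∈ S, x + z = y + y → x = y ∧ y = z) :
    S.card ≤ 3 * (Dset p n ((p - 1) * n / 3 + 1)).card := by
  classical
  set N := (p - 1) * n with hN
  set k := N / 3 with hk
  set d := N - k - 1 with hd
  set m := d / 2 with hm
  have hd2m : d ≤ 2 * m + 1 := by omega
  have hmk : m ≤ k + 1 := by omega
  -- doubling is injective
  have h2 : (2 : ZMod p) ≠ 0 := by
    have : ((2 : ℕ) : ZMod p) ≠ 0 := by
      rw [Ne, ZMod.natCast_eq_zero_iff]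
      intro h
      have := Nat.le_of_dvd (by norm_num) h
      omega
    simpa using this
  have hdouble : ∀ a b : Fin n → ZMod p, a + a = b + b → a = b := by
    intro a b hab
    funext i
    have h1 : a i + a i = b i + b i := congrFun hab i
    have h2' : (2 : ZMod p) * a i = (2 : ZMod p) * b i := by
      rw [two_mul, two_mul]; exact h1
    exact mul_left_cancel₀ h2 h2'
  set twoS : Finset (Fin n → ZMod p) := S.image (fun a => a + a) with htwoS
  have htwoScard : twoS.card = S.card := by
    apply Finset.card_image_of_injOn
    intro a _ b _ hab
    exact hdouble a b hab
  set U : Finset (Fin n → ZMod p) := Finset.univ \ twoS with hU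
  -- the restriction map and spaces
  set rho : ((Fin n → ZMod p) → ZMod p) →ₗ[ZMod p] (↥U → ZMod p) :=
    LinearMap.funLeft (ZMod p) (ZMod p) (Subtype.val : ↥U → (Fin n → ZMod p)) with hrho
  set Vd : Submodule (ZMod p) ((Fin n → ZMod p) → ZMod p) :=
    Submodule.span (ZMod p) (Set.range fun a : ↥(Dset p n d) => chi p n ↑a) with hVd
  set W : Submodule (ZMod p) ((Fin n → ZMod p) → ZMod p) :=
    (LinearMap.ker (rho.domRestrict Vd)).map Vd.subtype with hW
  -- dimension of Vd
  have hVdrank : finrank (ZMod p) Vd = (Dset p n d).card := by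
    rw [hVd, finrank_span_eq_card]
    · exact Fintype.card_coe _
    · have hinc : ∀ a : ↥(Dset p n d), (↑a : Fin n → ℕ) ∈ Box p n :=
        fun a => Dset_subset_Box p n d a.2
      have : (fun a : ↥(Dset p n d) => chi p n ↑a)
          = (fun a : ↥(Box p n) => chi p n ↑a)
            ∘ (fun a : ↥(Dset p n d) => (⟨↑a, hinc a⟩ : ↥(Box p n))) := rfl
      rw [this]
      exact (chi_indep p n).comp _ (fun a b hab => Subtype.ext (by
        simpa using congrArg Subtype.val hab))
  -- dimension bound below for W
  have hWrank : finrank (ZMod p) W = finrank (ZMod p) (LinearMap.ker (rho.domRestrict Vd)) :=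
    (LinearEquiv.finrank_eq
      (Submodule.equivMapOfInjective Vd.subtype (Submodule.injective_subtype Vd) _)).symm
  have hUcard : U.card + S.card = p ^ n := by
    have h1 : twoS ⊆ Finset.univ := Finset.subset_univ _
    have h2' : U.card = Fintype.card (Fin n → ZMod p) - twoS.card := by
      rw [hU, Finset.card_sdiff_of_subset h1, Finset.card_univ]
    have h3 : twoS.card ≤ Fintype.card (Fin n → ZMod p) :=
      Finset.card_le_univ _
    have h4 : Fintype.card (Fin n → ZMod p) = p ^ n := by
      rw [Fintype.card_fun, ZMod.card, Fintype.card_fin]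
    omega
  have hrank_nullity := LinearMap.finrank_range_add_finrank_ker (rho.domRestrict Vd)
  have hrange_le : finrank (ZMod p) (LinearMap.range (rho.domRestrict Vd)) ≤ U.card := by
    have := Submodule.finrank_le (LinearMap.range (rho.domRestrict Vd))
    rwa [Module.finrank_pi, Fintype.card_coe] at this
  have hlow : S.card + (Dset p n d).card ≤ finrank (ZMod p) W + p ^ n := by
    have hsle : S.card ≤ p ^ n := by
      have := Finset.card_le_univ S
      rwa [Fintype.card_fun, ZMod.card, Fintype.card_fin] at this
    omega
  -- complement counting
  have hcompl : p ^ n ≤ (Dset p n d).card + (Dset p n k).card := by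
    have hbox : (Box p n).card = p ^ n := by
      rw [Box, Fintype.card_piFinset]
      simp
    have hsplit := Finset.card_filter_add_card_filter_not
      (s := Box p n) (p := fun a => deg n a ≤ d)
    have hinj : ((Box p n).filter (fun a => ¬ deg n a ≤ d)).card ≤ (Dset p n k).card := by
      apply Finset.card_le_card_of_injOn (fun a => fun i => p - 1 - a i)
      · intro a ha
        rw [Finset.mem_coe, Finset.mem_filter] at ha
        obtain ⟨haB, had⟩ := ha
        have haB' := (mem_Box_iff p n).1 haB
        rw [Finset.mem_coe, mem_Dset_iff]
        beta_reduce
        constructor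
        · intro i; omega
        · have hdega : deg n a ≤ N := by
            rw [hN, deg]
            calc ∑ i, a i ≤ ∑ _i : Fin n, (p-1) := Finset.sum_le_sum fun i _ => haB' i
            _ = (p-1) * n := by rw [Finset.sum_const, Finset.card_univ, Fintype.card_fin,
                smul_eq_mul, mul_comm]
          have hdeg2 : deg n (fun i => p - 1 - a i) = (∑ _i : Fin n, (p-1)) - deg n a := by
            rw [deg, deg, eq_comm]
            rw [← Finset.sum_tsub_distrib _ (fun i _ => haB' i)]
          have hsum : (∑ _i : Fin n, (p-1)) = N := by
            rw [Finset.sum_const, Finset.card_univ, Fintype.card_fin, smul_eq_mul, hN, mul_comm]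
          rw [hdeg2, hsum]
          omega
      · intro a ha b hb hab
        rw [Finset.mem_coe, Finset.mem_filter] at ha hb
        have haB' := (mem_Box_iff p n).1 ha.1
        have hbB' := (mem_Box_iff p n).1 hb.1
        funext i
        have := congrFun hab i
        simp only at this
        have h1 := haB' i
        have h2' := hbB' i
        omega
    have heq : (Dset p n d) = (Box p n).filter (fun a => deg n a ≤ d) := rfl
    rw [heq]
    omega
  -- large support element of W
  obtain ⟨P, hPW, hPsupp⟩ := exists_large_support W
  obtain ⟨Q, hQker, hQP⟩ := Submodule.mem_map.1 hPW
  have hPVd : P ∈ Vd := by rw [← hQP]; exact Q.2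
  have hPvanish : ∀ x, x ∉ twoS → P x = 0 := by
    intro x hx
    have h0 : rho.domRestrict Vd Q = 0 := hQker
    have h1 : rho P = 0 := by rw [← hQP]; exact h0
    have hxU : x ∈ U := Finset.mem_sdiff.2 ⟨Finset.mem_univ _, hx⟩
    have := congrFun h1 ⟨x, hxU⟩
    simpa [hrho, LinearMap.funLeft] using this
  -- diagonal matrix argument
  obtain ⟨f, g, hfg⟩ := span_decomp p n hd2m P hPVd
  set A : Matrix ↥S (↥(Dset p n m) ⊕ ↥(Dset p n m)) (ZMod p) :=
    fun s j => Sum.elim (fun b : ↥(Dset p n m) => chi p n ↑b ↑s)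
      (fun c : ↥(Dset p n m) => g ↑c ↑s) j with hA
  set B : Matrix (↥(Dset p n m) ⊕ ↥(Dset p n m)) ↥S (ZMod p) :=
    fun j t => Sum.elim (fun b : ↥(Dset p n m) => f ↑b ↑t)
      (fun c : ↥(Dset p n m) => chi p n ↑c ↑t) j with hB
  have hAB : A * B = Matrix.diagonal (fun s : ↥S => P (↑s + ↑s)) := by
    ext s t
    have hABst : (A * B) s t = P (↑s + ↑t) := by
      rw [Matrix.mul_apply, Fintype.sum_sum_type]
      rw [hfg]
      congr 1
      · rw [← Finset.sum_coe_sort (Dset p n m) (fun b => chi p n b ↑s * f b ↑t)]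
        exact Finset.sum_congr rfl fun b _ => by simp [hA, hB]
      · rw [← Finset.sum_coe_sort (Dset p n m) (fun c => g c ↑s * chi p n c ↑t)]
        exact Finset.sum_congr rfl fun c _ => by simp [hA, hB]
    by_cases hst : s = t
    · subst hst
      rw [hABst, Matrix.diagonal_apply_eq]
    · rw [hABst, Matrix.diagonal_apply_ne _ hst]
      apply hPvanish
      intro hmem
      obtain ⟨u, huS, huu⟩ := Finset.mem_image.1 hmem
      obtain ⟨h1, h2'⟩ := hS ↑s s.2 u huS ↑t t.2 huu.symm
      exact hst (Subtype.ext (h1.trans h2'))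
  have hrank1 : Fintype.card {s : ↥S // P (↑s + ↑s) ≠ 0} ≤ 2 * (Dset p n m).card := by
    have e1 : (Matrix.diagonal (fun s : ↥S => P (↑s + ↑s))).rank
        = Fintype.card {s : ↥S // P (↑s + ↑s) ≠ 0} := Matrix.rank_diagonal _
    have e2 : (A * B).rank ≤ A.rank := Matrix.rank_mul_le_left A B
    have e3 : A.rank ≤ Fintype.card (↥(Dset p n m) ⊕ ↥(Dset p n m)) :=
      Matrix.rank_le_card_width A
    rw [Fintype.card_sum, Fintype.card_coe] at e3
    rw [← e1, ← hAB]
    omega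
  -- support of P is counted by S
  have hsupp2 : (Finset.univ.filter fun x => P x ≠ 0).card
      ≤ (S.filter fun a => P (a + a) ≠ 0).card := by
    have hsub : (Finset.univ.filter fun x => P x ≠ 0)
        ⊆ (S.filter fun a => P (a + a) ≠ 0).image (fun a => a + a) := by
      intro x hx
      rw [Finset.mem_filter] at hx
      have hxtwo : x ∈ twoS := by
        by_contra hc
        exact hx.2 (hPvanish x hc)
      obtain ⟨a, haS, hax⟩ := Finset.mem_image.1 hxtwo
      apply Finset.mem_image.2
      exact ⟨a, Finset.mem_filter.2 ⟨haS, by rw [hax]; exact hx.2⟩, hax⟩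
    calc (Finset.univ.filter fun x => P x ≠ 0).card
        ≤ ((S.filter fun a => P (a + a) ≠ 0).image (fun a => a + a)).card :=
          Finset.card_le_card hsub
      _ ≤ (S.filter fun a => P (a + a) ≠ 0).card := Finset.card_image_le
  have hsupp3 : (S.filter fun a => P (a + a) ≠ 0).card
      = Fintype.card {s : ↥S // P (↑s + ↑s) ≠ 0} := by
    rw [Fintype.card_subtype]
    apply Finset.card_bij (fun (s : Fin n → ZMod p) hs =>
      (⟨s, (Finset.mem_filter.1 hs).1⟩ : ↥S))
    · intro a ha
      rw [Finset.mem_filter]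
      exact ⟨Finset.mem_univ _, (Finset.mem_filter.1 ha).2⟩
    · intro a ha b hb hab
      exact congrArg Subtype.val hab
    · intro s hs
      refine ⟨↑s, Finset.mem_filter.2 ⟨s.2, (Finset.mem_filter.1 hs).2⟩, rfl⟩
  -- assemble
  have hfinal : finrank (ZMod p) W ≤ 2 * (Dset p n m).card := by
    calc finrank (ZMod p) W ≤ (Finset.univ.filter fun x => P x ≠ 0).card := hPsupp
      _ ≤ (S.filter fun a => P (a + a) ≠ 0).card := hsupp2
      _ = Fintype.card {s : ↥S // P (↑s + ↑s) ≠ 0} := hsupp3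
      _ ≤ 2 * (Dset p n m).card := hrank1
  have hmono1 : (Dset p n m).card ≤ (Dset p n (k+1)).card :=
    Finset.card_le_card (Dset_mono p n hmk)
  have hmono2 : (Dset p n k).card ≤ (Dset p n (k+1)).card :=
    Finset.card_le_card (Dset_mono p n (Nat.le_succ k))
  have hgoal : (Dset p n ((p - 1) * n / 3 + 1)) = Dset p n (k+1) := by rw [hk, hN]
  rw [hgoal]
  omega



lemma count_bound {x : ℝ} (hx0 : 0 < x) (hx1 : x ≤ 1) (t : ℕ) :
    ((Dset p n t).card : ℝ) * x ^ t ≤ (∑ j ∈ Finset.range p, x ^ j) ^ n := by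
  have h1 : ((Dset p n t).card : ℝ) * x ^ t = ∑ _a ∈ Dset p n t, x ^ t := by
    rw [Finset.sum_const, nsmul_eq_mul]
  rw [h1]
  have h2 : ∑ _a ∈ Dset p n t, x ^ t ≤ ∑ a ∈ Dset p n t, x ^ deg n a := by
    apply Finset.sum_le_sum
    intro a ha
    exact pow_le_pow_of_le_one hx0.le hx1 (mem_Dset_iff p n |>.1 ha).2
  have h3 : ∑ a ∈ Dset p n t, x ^ deg n a ≤ ∑ a ∈ Box p n, x ^ deg n a := by
    apply Finset.sum_le_sum_of_subset_of_nonneg (Dset_subset_Box p n t)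
    intro a _ _
    positivity
  have h4 : ∑ a ∈ Box p n, x ^ deg n a = (∑ j ∈ Finset.range p, x ^ j) ^ n := by
    have : ∀ a : Fin n → ℕ, x ^ deg n a = ∏ i, x ^ a i := by
      intro a
      rw [deg, Finset.prod_pow_eq_pow_sum]
    rw [Finset.sum_congr rfl fun a _ => this a]
    rw [Box, ← Finset.prod_univ_sum]
    rw [Finset.prod_const, Finset.card_univ, Fintype.card_fin]
  calc ∑ _a ∈ Dset p n t, x ^ t ≤ ∑ a ∈ Dset p n t, x ^ deg n a := h2
    _ ≤ ∑ a ∈ Box p n, x ^ deg n a := h3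
    _ = _ := h4

end EGaux2

open EGaux EGaux2 in
lemma exists_good_x (p : ℕ) (hp3 : 3 ≤ p) :
    ∃ x : ℝ, 0 < x ∧ x < 1 ∧
      (∑ j ∈ Finset.range p, x ^ j) < p * x ^ (((p : ℝ) - 1) / 3) := by
  set e : ℝ := ((p : ℝ) - 1) / 3 with he
  set φ : ℝ → ℝ := fun x => p * x ^ e - ∑ j ∈ Finset.range p, x ^ j with hφdef
  have hgauss : (∑ j ∈ Finset.range p, (j : ℝ)) = p * ((p : ℝ) - 1) / 2 := by
    have h := Finset.sum_range_id_mul_two p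
    have h2 : ((∑ j ∈ Finset.range p, j : ℕ) : ℝ) * 2 = ((p * (p - 1) : ℕ) : ℝ) := by
      exact_mod_cast congrArg (fun t : ℕ => (t : ℝ)) h
    push_cast [Nat.cast_sub (show 1 ≤ p by omega)] at h2
    linarith
  set D : ℝ := p * (e * (1 : ℝ) ^ (e - 1)) - ∑ j ∈ Finset.range p, (j : ℝ) * (1 : ℝ) ^ (j - 1)
    with hD
  have hDval : D = p * e - p * (p - 1) / 2 := by
    rw [hD, Real.one_rpow]
    simp only [one_pow, mul_one]
    rw [hgauss]
  have hDneg : D < 0 := by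
    rw [hDval, he]
    have hp0 : (0 : ℝ) < p := by positivity
    have hp3' : (3 : ℝ) ≤ (p : ℝ) := by exact_mod_cast hp3
    nlinarith [mul_pos hp0 (by linarith : (0:ℝ) < (p:ℝ) - 1)]
  have hφ : HasDerivAt φ D 1 := by
    have h1 : HasDerivAt (fun x : ℝ => x ^ e) (e * (1 : ℝ) ^ (e - 1)) 1 :=
      Real.hasDerivAt_rpow_const (Or.inl one_ne_zero)
    have h2 : HasDerivAt (fun x : ℝ => ∑ j ∈ Finset.range p, x ^ j)
        (∑ j ∈ Finset.range p, (j : ℝ) * (1 : ℝ) ^ (j - 1)) 1 := by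
      apply HasDerivAt.fun_sum
      intro j _
      exact hasDerivAt_pow j 1
    exact (h1.const_mul _).sub h2
  rw [hasDerivAt_iff_tendsto_slope] at hφ
  have hev : ∀ᶠ z in nhdsWithin 1 {(1 : ℝ)}ᶜ, slope φ 1 z < 0 :=
    hφ.eventually (Iio_mem_nhds hDneg)
  have hle : nhdsWithin (1 : ℝ) (Set.Iio 1) ≤ nhdsWithin 1 {(1 : ℝ)}ᶜ :=
    nhdsWithin_mono 1 (fun z hz => ne_of_lt hz)
  have hev' : ∀ᶠ z in nhdsWithin (1 : ℝ) (Set.Iio 1), slope φ 1 z < 0 := hle hev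
  have hIoo : Set.Ioo (0 : ℝ) 1 ∈ nhdsWithin (1 : ℝ) (Set.Iio 1) :=
    Ioo_mem_nhdsLT_of_mem (by constructor <;> norm_num)
  have hcomb := hev'.and (Filter.eventually_of_mem hIoo fun z hz => hz)
  obtain ⟨x, hslope, hx0, hx1⟩ := hcomb.exists
  refine ⟨x, hx0, hx1, ?_⟩
  have hφ1 : φ 1 = 0 := by
    rw [hφdef]
    simp only [Real.one_rpow, one_pow, mul_one, Finset.sum_const, Finset.card_range,
      nsmul_eq_mul, mul_one]
    ring
  rw [slope_def_field, hφ1, sub_zero] at hslope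
  have hx1' : x - 1 < 0 := by linarith
  have hφx : 0 < φ x := by
    rcases div_neg_iff.1 hslope with ⟨h1, _⟩ | ⟨_, h2⟩
    · exact h1
    · linarith
  rw [hφdef] at hφx
  simp only at hφx
  linarith

/-- Ellenberg–Gijswijt: for every prime `p ≥ 3`, progression-free subsets of `𝔽_p^n`
have size at most `C_p · p^(c_p n)` for constants `0 < c_p < 1`, `C_p > 0`. -/
theorem ellenberg_gijswijt (p : ℕ) (hp : p.Prime) (hp3 : 3 ≤ p) :
    ∃ c C : ℝ, 0 < c ∧ c < 1 ∧ 0 < C ∧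
      ∀ n : ℕ, 1 ≤ n →
        ∀ S : Finset (Fin n → ZMod p),
          (∀ x ∈ S, ∀ y ∈ S, ∀ z ∈ S, x + z = y + y → x = y ∧ y = z) →
          (S.card : ℝ) ≤ C * (p : ℝ) ^ (c * n) := by
  haveI := Fact.mk hp
  obtain ⟨x, hx0, hx1, hgood⟩ := exists_good_x p hp3
  have hp1R : (1 : ℝ) < p := by exact_mod_cast (by omega : 1 < p)
  have hp0R : (0 : ℝ) < p := by positivity
  set e : ℝ := ((p : ℝ) - 1) / 3 with he
  have he0 : 0 ≤ e := by
    rw [he]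
    have : (3 : ℝ) ≤ p := by exact_mod_cast hp3
    linarith
  set G : ℝ := ∑ j ∈ Finset.range p, x ^ j with hG
  have hG1 : 1 + x ≤ G := by
    have hsub : ({0, 1} : Finset ℕ) ⊆ Finset.range p := by
      intro j hj
      simp only [Finset.mem_insert, Finset.mem_singleton] at hj
      rcases hj with rfl | rfl <;> (rw [Finset.mem_range]; omega)
    have hpair : (1 : ℝ) + x = ∑ j ∈ ({0, 1} : Finset ℕ), x ^ j := by
      rw [Finset.sum_pair (by norm_num : (0 : ℕ) ≠ 1)]
      norm_num
    rw [hG, hpair]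
    exact Finset.sum_le_sum_of_subset_of_nonneg hsub (fun j _ _ => by positivity)
  have hGpos : 0 < G := by linarith
  have hxe_pos : 0 < x ^ e := Real.rpow_pos_of_pos hx0 e
  have hxne_pos : 0 < x ^ (-e) := Real.rpow_pos_of_pos hx0 (-e)
  have hxne_ge1 : 1 ≤ x ^ (-e) :=
    Real.one_le_rpow_of_pos_of_le_one_of_nonpos hx0 hx1.le (by linarith)
  set B : ℝ := x ^ (-e) * G with hB
  have hBpos : 0 < B := mul_pos hxne_pos hGpos
  have hB1 : 1 < B := by
    calc (1 : ℝ) < 1 * (1 + x) := by linarith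
    _ ≤ x ^ (-e) * G := by
        apply mul_le_mul hxne_ge1 hG1 (by linarith) (by linarith)
  have hBp : B < p := by
    rw [hB, Real.rpow_neg hx0.le]
    rw [inv_mul_eq_div, div_lt_iff₀ hxe_pos]
    rw [hG]
    calc (∑ j ∈ Finset.range p, x ^ j) < p * x ^ e := hgood
    _ = p * x ^ e := rfl
  set c : ℝ := Real.logb p B with hc
  set C : ℝ := 3 / x with hC
  have hcpos : 0 < c := Real.logb_pos hp1R hB1
  have hc1 : c < 1 := by
    have h1 : Real.logb p B < Real.logb p p :=
      Real.logb_lt_logb hp1R hBpos hBp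
    rwa [Real.logb_self_eq_one hp1R] at h1
  have hCpos : 0 < C := by rw [hC]; positivity
  refine ⟨c, C, hcpos, hc1, hCpos, ?_⟩
  intro n hn S hS
  set K := (p - 1) * n / 3 with hK
  have hkey := EGaux2.key_bound p n hp3 S hS
  have hcb := EGaux2.count_bound p n hx0 hx1.le (K + 1)
  set A := (EGaux.Dset p n (K + 1)).card with hA
  have hxK1 : (0 : ℝ) < x ^ (K + 1) := by positivity
  have hA1 : (A : ℝ) ≤ G ^ n / x ^ (K + 1) := by
    rw [le_div_iff₀ hxK1]
    exact hcb
  have hS3 : (S.card : ℝ) ≤ 3 * (G ^ n / x ^ (K + 1)) := by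
    calc (S.card : ℝ) ≤ 3 * (A : ℝ) := by exact_mod_cast hkey
    _ ≤ 3 * (G ^ n / x ^ (K + 1)) := by linarith
  -- compare x^K with x^r for r = e * n
  have hKr : (K : ℝ) ≤ e * n := by
    have h1 : K * 3 ≤ (p - 1) * n := Nat.div_mul_le_self _ _
    have h2 : ((K * 3 : ℕ) : ℝ) ≤ (((p - 1) * n : ℕ) : ℝ) := by exact_mod_cast h1
    push_cast [Nat.cast_sub (show 1 ≤ p by omega)] at h2
    rw [he]
    linarith
  have hxKr : x ^ (e * n) ≤ x ^ (K : ℝ) :=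
    Real.rpow_le_rpow_of_exponent_ge hx0 hx1.le hKr
  have hxKnat : x ^ (K : ℝ) = x ^ K := Real.rpow_natCast x K
  have hxen_pos : (0 : ℝ) < x ^ (e * n) := Real.rpow_pos_of_pos hx0 _
  have hGn_nonneg : (0 : ℝ) ≤ G ^ n := by positivity
  have hBn : B ^ n = G ^ n / x ^ (e * n) := by
    rw [hB, mul_pow, div_eq_inv_mul]
    congr 1
    rw [← Real.rpow_natCast (x ^ (-e)) n, ← Real.rpow_mul hx0.le, ← Real.rpow_neg hx0.le]
    ring_nf
  have hstep : G ^ n / x ^ K ≤ B ^ n := by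
    rw [hBn]
    apply div_le_div_of_nonneg_left hGn_nonneg hxen_pos
    rw [← hxKnat]
    exact hxKr
  have hfinal1 : 3 * (G ^ n / x ^ (K + 1)) = C * (G ^ n / x ^ K) := by
    rw [hC, pow_succ]
    field_simp
  have hBnc : B ^ n = (p : ℝ) ^ (c * n) := by
    have h1 : (p : ℝ) ^ c = B := Real.rpow_logb hp0R (ne_of_gt hp1R) hBpos
    rw [Real.rpow_mul hp0R.le, h1, Real.rpow_natCast]
  calc (S.card : ℝ) ≤ 3 * (G ^ n / x ^ (K + 1)) := hS3
  _ = C * (G ^ n / x ^ K) := hfinal1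
  _ ≤ C * B ^ n := by
      apply mul_le_mul_of_nonneg_left hstep hCpos.le
  _ = C * (p : ℝ) ^ (c * n) := by rw [hBnc]
end

section
/- For every α > 0 there exists N_0 such that for all N > N_0, every subset S ⊆ {1, 2, ..., N} with |S| ≥ α·N contains a nontrivial three-term arithmetic progression; equivalently, the largest subset of {1,...,N} with no three-term arithmetic progression has size o(N). -/
open Filter Asymptotics

/-- Roth's theorem: every subset of `{1,...,N}` of positive density contains a
nontrivial three-term arithmetic progression, once `N` is large enough. -/
theorem roth (α : ℝ) (hα : 0 < α) :
    ∃ N₀ : ℕ, ∀ N : ℕ, N₀ < N →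
      ∀ S : Finset ℕ, S ⊆ Finset.Icc 1 N → α * N ≤ S.card →
        ∃ x d : ℕ, d ≠ 0 ∧ x ∈ S ∧ x + d ∈ S ∧ x + 2 * d ∈ S := by
  have h := rothNumberNat_isLittleO_id.def (by positivity : (0:ℝ) < α / 2)
  rw [Filter.eventually_atTop] at h
  obtain ⟨N₀, hN₀⟩ := h
  refine ⟨N₀, fun N hN S hS hcard => ?_⟩
  by_contra hno
  push_neg at hno
  have hfree : ThreeAPFree (↑S : Set ℕ) := by
    intro a ha b hb c hc habc
    by_contra hab
    rcases lt_or_gt_of_ne hab with h' | h'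
    · exact (hno a (b - a) (by omega) ha (by have : a + (b - a) = b := (by omega); rw [this]; exact Finset.mem_coe.mp hb)
        (by have : a + 2 * (b - a) = c := (by omega); rw [this]; exact Finset.mem_coe.mp hc)).elim
    · have hcb : c < b := by omega
      exact (hno c (b - c) (by omega) hc
        (by have : c + (b - c) = b := (by omega); rw [this]; exact Finset.mem_coe.mp hb)
        (by have : c + 2 * (b - c) = a := (by omega); rw [this]; exact Finset.mem_coe.mp ha)).elim
  have hle : S.card ≤ rothNumberNat N := by
    have := hfree.le_addRothNumber (fun x hx => by have := hS hx; simp only [Finset.mem_Icc] at this; simp only [Finset.mem_Ico]; omega :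
      S ⊆ Finset.Ico 1 (N + 1))
    simpa [addRothNumber_Ico] using this
  have h1 : (rothNumberNat N : ℝ) ≤ α / 2 * N := by
    have := hN₀ N (by omega)
    rwa [Real.norm_natCast, Real.norm_natCast] at this
  have hNpos : (0:ℝ) < N := by exact_mod_cast (by omega : 0 < N)
  have hle' : (S.card : ℝ) ≤ (rothNumberNat N : ℝ) := Nat.cast_le.mpr hle
  nlinarith
end

section
/- For every ε > 0 there exists N_0 such that for every integer N > N_0 there exists a subset S ⊆ {1, 2, ..., N} containing no three-term arithmetic progression with |S| ≥ N · exp(−(2·√(log 4) + ε)·√(log N)). -/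
open Real Finset

private lemma behrend_log_one_sub {t : ℝ} (h0 : 0 ≤ t) (h2 : t ≤ 1/2) :
    -(2*t) ≤ Real.log (1 - t) := by
  have h1 : (0:ℝ) < 1 - t := by linarith
  rw [← Real.exp_le_exp, Real.exp_log h1, Real.exp_neg]
  have h3 := Real.add_one_le_exp (2*t)
  have h4 : (0:ℝ) < 1 + 2*t := by linarith
  have h5 : (Real.exp (2*t))⁻¹ ≤ (1 + 2*t)⁻¹ := by gcongr; linarith
  refine h5.trans ?_
  rw [inv_le_iff_one_le_mul₀ h4]
  nlinarith

private lemma behrend_sq_le_exp {y : ℝ} (hy : 0 ≤ y) : y^2/3 ≤ Real.exp y := by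
  have h1 : Real.exp y = (Real.exp (y/3))^3 := by
    rw [← Real.exp_nat_mul]; ring_nf
  have h2 := Real.add_one_le_exp (y/3)
  have h3 : (y/3+1)^3 ≤ (Real.exp (y/3))^3 := by gcongr
  nlinarith

private lemma behrend_log4 : Real.log 4 = 2 * Real.log 2 := by
  rw [show (4:ℝ) = 2^(2:ℕ) by norm_num, Real.log_pow]; push_cast; ring

private lemma behrend_sqrtA {L : ℝ} (hL : 1 ≤ L) :
    Real.sqrt (2*L/Real.log 2) * Real.log 2 = Real.sqrt (Real.log 4) * Real.sqrt L := by
  have hl2 : (0:ℝ) < Real.log 2 := Real.log_pos (by norm_num)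
  rw [behrend_log4]
  rw [← Real.sqrt_sq hl2.le, ← Real.sqrt_mul (by positivity), ← Real.sqrt_mul (by positivity)]
  congr 1
  field_simp
  ring_nf; rw [Real.sq_sqrt (by positivity)]

private lemma behrend_sqrtB {L : ℝ} (hL : 1 ≤ L) :
    2*L/Real.sqrt (2*L/Real.log 2) = Real.sqrt (Real.log 4) * Real.sqrt L := by
  have hl2 : (0:ℝ) < Real.log 2 := Real.log_pos (by norm_num)
  have hL0 : (0:ℝ) < L := by linarith
  have hs : (0:ℝ) < Real.sqrt (2*L/Real.log 2) := Real.sqrt_pos.2 (by positivity)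
  rw [behrend_log4, div_eq_iff hs.ne', ← Real.sqrt_mul (by positivity),
    ← Real.sqrt_mul (by positivity),
    show (2:ℝ)*L = Real.sqrt ((2*L)^2) by rw [Real.sqrt_sq (by positivity)]]
  congr 1
  field_simp
  ring_nf; rw [show L^2*4 = (L*2)^2 by ring, Real.sqrt_sq (by positivity)]

set_option maxHeartbeats 1000000 in
private lemma behrend_aux (ε : ℝ) (hε : 0 < ε) (hε1 : ε ≤ 1) :
    ∃ N₀ : ℕ, ∀ N : ℕ, N₀ < N →
      ∃ S : Finset ℕ, S ⊆ Finset.Icc 1 N ∧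
        (¬ ∃ x d : ℕ, d ≠ 0 ∧ x ∈ S ∧ x + d ∈ S ∧ x + 2 * d ∈ S) ∧
        (N : ℝ) * Real.exp (-(2 * Real.sqrt (Real.log 4) + ε) * Real.sqrt (Real.log N))
          ≤ S.card := by
  set L₀ : ℝ := max 110000 ((5/ε)^(4:ℕ)) with hL₀def
  refine ⟨⌈Real.exp L₀⌉₊, fun N hN => ?_⟩
  have hL₀110 : (110000:ℝ) ≤ L₀ := le_max_left _ _
  have hNR : Real.exp L₀ < N := by
    calc Real.exp L₀ ≤ ⌈Real.exp L₀⌉₊ := Nat.le_ceil _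
    _ < N := by exact_mod_cast hN
  have hN0 : (0:ℝ) < N := lt_trans (Real.exp_pos _) hNR
  set L := Real.log N with hLdef
  have hLge : L₀ < L := by rw [hLdef, Real.lt_log_iff_exp_lt hN0]; exact hNR
  have hL : (110000:ℝ) ≤ L := le_trans hL₀110 hLge.le
  have hL1 : (1:ℝ) ≤ L := by linarith
  have hL0 : (0:ℝ) < L := by linarith
  have hNexp : (N:ℝ) = Real.exp L := (Real.exp_log hN0).symm
  have hl2 : (0:ℝ) < Real.log 2 := Real.log_pos (by norm_num)
  have hl2' : Real.log 2 ≤ 1 := by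
    have := Real.log_le_sub_one_of_pos (show (0:ℝ) < 2 by norm_num); linarith
  have hl3 : Real.log 3 ≤ 2 := by
    have := Real.log_le_sub_one_of_pos (show (0:ℝ) < 3 by norm_num); linarith
  set s := Real.sqrt (2*L/Real.log 2) with hsdef
  have hs0 : 0 < s := Real.sqrt_pos.2 (by positivity)
  set n := ⌈s⌉₊ with hndef
  have hsn : s ≤ (n:ℝ) := Nat.le_ceil s
  have hns : (n:ℝ) < s + 1 := Nat.ceil_lt_add_one hs0.le
  have h1s : (1:ℝ) < s := by
    rw [hsdef, show (1:ℝ) = Real.sqrt 1 by simp]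
    apply Real.sqrt_lt_sqrt (by norm_num)
    rw [lt_div_iff₀ hl2]; nlinarith
  have hn2 : 2 ≤ n := by
    have : 1 < n := by rwa [hndef, Nat.lt_ceil, Nat.cast_one]
    omega
  have hn0 : (0:ℝ) < (n:ℝ) := lt_of_lt_of_le (by linarith) hsn
  have hsqL : (0:ℝ) < Real.sqrt L := Real.sqrt_pos.2 hL0
  have hsqL1 : (1:ℝ) ≤ Real.sqrt L := by
    rw [show (1:ℝ) = Real.sqrt 1 by simp]; exact Real.sqrt_le_sqrt hL1
  have hs2 : s ≤ 2 * Real.sqrt L := by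
    rw [hsdef, show 2*Real.sqrt L = Real.sqrt (4*L) by
      rw [show (4:ℝ)*L = 2^2*L by ring, Real.sqrt_mul (by positivity), Real.sqrt_sq (by norm_num)]]
    apply Real.sqrt_le_sqrt
    have hl2h : (1:ℝ)/2 ≤ Real.log 2 := by linarith [Real.log_two_gt_d9]
    rw [div_le_iff₀ hl2]; nlinarith
  have hn3 : (n:ℝ) ≤ 3 * Real.sqrt L := by linarith
  have hLn : Real.sqrt L / 3 ≤ L / n := by
    rw [div_le_div_iff₀ (by norm_num) hn0]
    nlinarith [Real.sq_sqrt hL0.le, mul_le_mul_of_nonneg_left hn3 hsqL.le]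
  set x := Real.exp (L/n) with hxdef
  have hx0 : (0:ℝ) < x := Real.exp_pos _
  have hx8 : (8:ℝ) ≤ x := by
    have h9 : (9:ℝ) ≤ Real.sqrt L := by
      rw [show (9:ℝ) = Real.sqrt 81 by
        rw [show (81:ℝ)=9^2 by norm_num, Real.sqrt_sq (by norm_num)]]
      exact Real.sqrt_le_sqrt (by linarith)
    have h3 : (3:ℝ) ≤ L/n := by linarith
    have he2 : (2:ℝ) ≤ Real.exp 1 := by have := Real.add_one_le_exp 1; linarith
    calc (8:ℝ) = 2^(3:ℕ) := by norm_num
    _ ≤ (Real.exp 1)^(3:ℕ) := by gcongr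
    _ = Real.exp 3 := by rw [← Real.exp_nat_mul]; ring_nf
    _ ≤ x := Real.exp_le_exp.2 h3
  have hxn : x^n = Real.exp L := by
    rw [hxdef, ← Real.exp_nat_mul]
    congr 1
    field_simp
  set d := ⌊x/2⌋₊ with hddef
  have hdub : (d:ℝ) ≤ x/2 := Nat.floor_le (by positivity)
  have hdlb : x/2 - 1 < (d:ℝ) := by have := Nat.lt_floor_add_one (x/2); linarith
  have hd3 : (3:ℝ) ≤ (d:ℝ) := by linarith
  have hdR0 : (0:ℝ) < (d:ℝ) := by linarith
  have hd0 : d ≠ 0 := by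
    intro h; rw [h] at hd3; norm_num at hd3
  -- (2d-1)^n ≤ N in ℕ
  have hdN : (2*d - 1)^n ≤ N := by
    have h1 : ((2*d)^n : ℕ) ≤ N := by
      have h2 : (((2*d)^n : ℕ) : ℝ) ≤ (N:ℝ) := by
        push_cast
        calc ((2:ℝ)*d)^n ≤ x^n := by gcongr <;> linarith
        _ = Real.exp L := hxn
        _ = (N:ℝ) := hNexp.symm
      exact_mod_cast h2
    calc (2*d-1)^n ≤ (2*d)^n := Nat.pow_le_pow_left (by omega) _
    _ ≤ N := h1
  -- log d bounds
  have hlogd_ub : Real.log d ≤ L / n := by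
    calc Real.log d ≤ Real.log x := Real.log_le_log hdR0 (by linarith)
    _ = L/n := Real.log_exp _
  have hlogd_lb : L/n - Real.log 2 - 4/x ≤ Real.log d := by
    have hsplit : x/2 - 1 = (x/2) * (1 - 2/x) := by field_simp
    have h12x : (0:ℝ) < 1 - 2/x := by
      rw [sub_pos, div_lt_one hx0]; linarith
    have ht : Real.log (x/2 - 1) ≤ Real.log (d:ℝ) := by
      apply Real.log_le_log (by nlinarith) hdlb.le
    refine le_trans ?_ ht
    rw [hsplit, Real.log_mul (by positivity) h12x.ne', Real.log_div hx0.ne' (by norm_num),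
      Real.log_exp]
    have hhelp : -(2*(2/x)) ≤ Real.log (1 - 2/x) := by
      apply behrend_log_one_sub (by positivity)
      rw [div_le_iff₀ hx0]; linarith
    have : -(2*(2/x)) = -(4/x) := by ring
    linarith [this ▸ hhelp]
  -- key error bound
  have key : Real.log 2 + 4*(n:ℝ)/x + Real.log n ≤ ε * Real.sqrt L := by
    set u := L ^ ((1:ℝ)/4) with hudef
    have hu0 : (0:ℝ) < u := Real.rpow_pos_of_pos hL0 _
    have hu1 : (1:ℝ) ≤ u := Real.one_le_rpow hL1 (by norm_num)
    have huL : u^2 = Real.sqrt L := by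
      rw [hudef, ← Real.rpow_natCast (L ^ ((1:ℝ)/4)) 2, ← Real.rpow_mul hL0.le,
        Real.sqrt_eq_rpow]
      norm_num
    have hu5 : 5/ε ≤ u := by
      have h1 : (5/ε)^(4:ℕ) ≤ L := le_trans (le_max_right _ _) hLge.le
      calc 5/ε = ((5/ε)^(4:ℕ)) ^ ((1:ℝ)/4) := by
            rw [← Real.rpow_natCast (5/ε) 4, ← Real.rpow_mul (by positivity)]
            norm_num
      _ ≤ u := Real.rpow_le_rpow (by positivity) h1 (by norm_num)
    have hu5' : (5:ℝ) ≤ u := by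
      refine le_trans ?_ hu5
      rw [le_div_iff₀ hε]; nlinarith
    have hx_lb : L/27 ≤ x := by
      calc L/27 = (Real.sqrt L/3)^2/3 := by
            rw [div_pow, Real.sq_sqrt hL0.le]; ring
      _ ≤ Real.exp (Real.sqrt L/3) := behrend_sq_le_exp (by positivity)
      _ ≤ x := Real.exp_le_exp.2 hLn
    have h4nx : 4*(n:ℝ)/x ≤ 1 := by
      rw [div_le_one hx0]
      have h324 : (324:ℝ) ≤ Real.sqrt L := by
        rw [show (324:ℝ) = Real.sqrt (324^2) by rw [Real.sqrt_sq (by norm_num)]]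
        exact Real.sqrt_le_sqrt (by nlinarith)
      have hLs : L = Real.sqrt L * Real.sqrt L := (Real.mul_self_sqrt hL0.le).symm
      nlinarith
    have hlogn : Real.log n ≤ 2 + 2*u := by
      have h3L : (0:ℝ) < 3*Real.sqrt L := by positivity
      have hlog3 : Real.log (3*Real.sqrt L) = Real.log 3 + Real.log (Real.sqrt L) :=
        Real.log_mul (by norm_num) hsqL.ne'
      have h1 : Real.log (Real.sqrt L) = Real.log L / 2 := Real.log_sqrt hL0.le
      have hLu : L = u^(4:ℕ) := by
        rw [hudef, ← Real.rpow_natCast, ← Real.rpow_mul hL0.le]; norm_num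
      have h2 : Real.log L ≤ 4*u := by
        calc Real.log L = Real.log (u^(4:ℕ)) := by rw [← hLu]
        _ = 4 * Real.log u := by rw [Real.log_pow]; push_cast; ring
        _ ≤ 4*u := by have := Real.log_le_sub_one_of_pos hu0; linarith
      calc Real.log n ≤ Real.log (3*Real.sqrt L) := Real.log_le_log hn0 hn3
      _ ≤ 2 + 2*u := by rw [hlog3, h1]; linarith
    have hεu : (5:ℝ) ≤ ε*u := by
      have := mul_le_mul_of_nonneg_left hu5 hε.le
      rwa [mul_div_cancel₀ _ hε.ne'] at this
    have hfin : 4 + 2*u ≤ ε * u^2 := by nlinarith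
    rw [← huL]
    linarith
  -- main analytic estimate
  have hP1 : (n:ℝ) * Real.log 2 ≤ Real.sqrt (Real.log 4) * Real.sqrt L + Real.log 2 := by
    have hA := behrend_sqrtA hL1
    nlinarith
  have hP2 : 2*(L/(n:ℝ)) ≤ Real.sqrt (Real.log 4) * Real.sqrt L := by
    have h := div_le_div_of_nonneg_left (show (0:ℝ) ≤ 2*L by positivity) hs0 hsn
    rw [hsdef, behrend_sqrtB hL1, mul_div_assoc] at h
    exact h
  have hmain : (N:ℝ) * Real.exp (-(2 * Real.sqrt (Real.log 4) + ε) * Real.sqrt L)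
      ≤ (d:ℝ)^(n-2) / (n:ℝ) := by
    have hpos : (0:ℝ) < (d:ℝ)^(n-2) / (n:ℝ) := by positivity
    rw [hNexp, ← Real.exp_log hpos, ← Real.exp_add, Real.exp_le_exp,
      Real.log_div (by positivity) (by positivity), Real.log_pow,
      Nat.cast_sub hn2, Nat.cast_two]
    -- goal : L + -(2√log4+ε)√L ≤ (n-2) * log d - log n
    have e1 : (n:ℝ)*(L/n) = L := by field_simp
    have g1 : (n:ℝ)*(L/n - Real.log 2 - 4/x) ≤ (n:ℝ)*Real.log d :=
      mul_le_mul_of_nonneg_left hlogd_lb hn0.le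
    have g2 : (n:ℝ)*(L/n - Real.log 2 - 4/x) = L - n*Real.log 2 - 4*n/x := by
      rw [mul_sub, mul_sub, e1]; ring
    have g3 : L - (n:ℝ)*Real.log 2 - 4*(n:ℝ)/x ≤ (n:ℝ)*Real.log d := by
      rw [← g2]; exact g1
    linarith [g3, hlogd_ub, key, hP1, hP2]
  -- combinatorial wrap-up
  have hroth : (N:ℝ) * Real.exp (-(2 * Real.sqrt (Real.log 4) + ε) * Real.sqrt L)
      ≤ (rothNumberNat N : ℝ) := by
    calc _ ≤ (d:ℝ)^(n-2) / (n:ℝ) := hmain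
    _ ≤ (rothNumberNat ((2*d-1)^n) : ℝ) := Behrend.bound_aux hd0 hn2
    _ ≤ (rothNumberNat N : ℝ) := by exact_mod_cast rothNumberNat.mono hdN
  obtain ⟨T, hTsub, hTcard, hTfree⟩ := rothNumberNat_spec N
  refine ⟨T.image (· + 1), ?_, ?_, ?_⟩
  · intro a ha
    simp only [Finset.mem_image] at ha
    obtain ⟨t, ht, rfl⟩ := ha
    have := Finset.mem_range.1 (hTsub ht)
    rw [Finset.mem_Icc]
    omega
  · rintro ⟨y, dd, hdd, hy, hyd, hydd⟩
    simp only [Finset.mem_image] at hy hyd hydd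
    obtain ⟨a, ha, haa⟩ := hy
    obtain ⟨b, hb, hbb⟩ := hyd
    obtain ⟨c, hc, hcc⟩ := hydd
    have hac : a + c = b + b := by omega
    have := hTfree (Finset.mem_coe.2 ha) (Finset.mem_coe.2 hb) (Finset.mem_coe.2 hc) hac
    omega
  · rw [Finset.card_image_of_injective _ (add_left_injective 1), hTcard]
    exact hroth

/-- Behrend's construction: for every `ε > 0` and all large `N` there is a
progression-free subset of `{1,...,N}` of size at least
`N · exp(−(2√(log 4) + ε)·√(log N))`. -/
theorem behrend (ε : ℝ) (hε : 0 < ε) :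
    ∃ N₀ : ℕ, ∀ N : ℕ, N₀ < N →
      ∃ S : Finset ℕ, S ⊆ Finset.Icc 1 N ∧
        (¬ ∃ x d : ℕ, d ≠ 0 ∧ x ∈ S ∧ x + d ∈ S ∧ x + 2 * d ∈ S) ∧
        (N : ℝ) * Real.exp (-(2 * Real.sqrt (Real.log 4) + ε) * Real.sqrt (Real.log N))
          ≤ S.card := by
  obtain ⟨N₀, h⟩ := behrend_aux (min ε 1) (lt_min hε one_pos) (min_le_right _ _)
  refine ⟨N₀, fun N hN => ?_⟩
  obtain ⟨S, h1, h2, h3⟩ := h N hN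
  refine ⟨S, h1, h2, le_trans ?_ h3⟩
  have hm : min ε 1 ≤ ε := min_le_left _ _
  have h0 : (0:ℝ) ≤ Real.sqrt (Real.log N) := Real.sqrt_nonneg _
  have : -(2 * Real.sqrt (Real.log 4) + ε) * Real.sqrt (Real.log N)
      ≤ -(2 * Real.sqrt (Real.log 4) + min ε 1) * Real.sqrt (Real.log N) := by
    nlinarith
  gcongr
end

section
/- For all n ≥ 1, any subset S ⊆ 𝔽_3^n containing no three-term arithmetic progression satisfies |S| ≤ 3 · ∑ n!/(a!·b!·c!), where the sum is over all non-negative integers a, b, c with a + b + c = n and b + 2c ≤ 2n/3. Consequently there is a constant κ with 0 < κ < 1 such that |S| ≤ 3^{κ·n} for all sufficiently large n. -/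
open Finset

set_option linter.unusedSectionVars false
set_option linter.unreachableTactic false
set_option linter.unusedTactic false
set_option linter.unusedVariables false
set_option maxHeartbeats 1000000


open Finset

section pivot
variable {K : Type*} [Field K] {ι : Type*} [Fintype ι] [DecidableEq ι]

lemma exists_pivots (d : ℕ) : ∀ (W : Submodule K (ι → K)), d ≤ Module.finrank K W →
    ∃ (J : Finset ι) (w : ι → (ι → K)), J.card = d ∧ (∀ j ∈ J, w j ∈ W) ∧
      (∀ j ∈ J, ∀ k ∈ J, w j k = if j = k then 1 else 0) := by
  induction d with
  | zero => exact fun W _ => ⟨∅, fun _ => 0, by simp, by simp, by simp⟩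
  | succ d ih =>
    intro W hd
    have hW : W ≠ ⊥ := by
      intro h
      rw [h, finrank_bot] at hd
      omega
    obtain ⟨u, huW, hu⟩ := Submodule.ne_bot_iff W |>.1 hW
    obtain ⟨j₁, hj₁⟩ := Function.ne_iff.1 hu
    simp only [Pi.zero_apply] at hj₁
    set u' : ι → K := (u j₁)⁻¹ • u with hu'def
    have hu'W : u' ∈ W := W.smul_mem _ huW
    have hu'j₁ : u' j₁ = 1 := by
      simp [hu'def, inv_mul_cancel₀ hj₁]
    set W0 : Submodule K (ι → K) := W ⊓ LinearMap.ker (LinearMap.proj j₁) with hW0def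
    have hW0 : d ≤ Module.finrank K W0 := by
      set f : W →ₗ[K] K := (LinearMap.proj j₁).comp W.subtype with hfdef
      have h1 : Module.finrank K (LinearMap.range f) + Module.finrank K (LinearMap.ker f)
          = Module.finrank K W := LinearMap.finrank_range_add_finrank_ker f
      have h2 : Module.finrank K (LinearMap.range f) ≤ 1 := by
        simpa using Submodule.finrank_le (LinearMap.range f)
      have h3 : (LinearMap.ker f).map W.subtype = W0 := by
        ext x
        simp only [Submodule.mem_map, LinearMap.mem_ker, hW0def, Submodule.mem_inf]
        constructor
        · rintro ⟨y, hy, rfl⟩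
          exact ⟨y.2, by simpa [hfdef] using hy⟩
        · rintro ⟨hxW, hx⟩
          exact ⟨⟨x, hxW⟩, by simpa [hfdef] using hx, rfl⟩
      have h4 : Module.finrank K (LinearMap.ker f) = Module.finrank K W0 := by
        rw [← h3]
        exact (Submodule.finrank_map_subtype_eq W _).symm
      omega
    obtain ⟨J0, w0, hJ0card, hw0mem, hw0⟩ := ih W0 hW0
    have hw0W : ∀ j ∈ J0, w0 j ∈ W := fun j hj => (Submodule.mem_inf.1 (hw0mem j hj)).1
    have hw0j₁ : ∀ j ∈ J0, w0 j j₁ = 0 := fun j hj => by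
      have := (Submodule.mem_inf.1 (hw0mem j hj)).2
      simpa using this
    have hj₁J0 : j₁ ∉ J0 := by
      intro h
      have := hw0 j₁ h j₁ h
      rw [hw0j₁ j₁ h] at this
      simp at this
    refine ⟨insert j₁ J0,
      fun j => if j = j₁ then u' - ∑ k ∈ J0, (u' k) • w0 k else w0 j, ?_, ?_, ?_⟩
    · rw [card_insert_of_notMem hj₁J0, hJ0card]
    · intro j hj
      by_cases h : j = j₁
      · simp only [h, if_pos rfl]
        exact W.sub_mem hu'W (W.sum_mem fun k hk => W.smul_mem _ (hw0W k hk))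
      · simp only [if_neg h]
        exact hw0W j (by rcases mem_insert.1 hj with h' | h'; exact absurd h' h; exact h')
    · intro j hj k hk
      dsimp only
      by_cases hjj : j = j₁
      · subst hjj
        rw [if_pos rfl]
        by_cases hkj : j = k
        · subst hkj
          rw [if_pos rfl]
          simp only [Pi.sub_apply, Finset.sum_apply, Pi.smul_apply, smul_eq_mul]
          rw [hu'j₁, Finset.sum_eq_zero fun m hm => by rw [hw0j₁ m hm, mul_zero]]
          ring
        · have hkJ0 : k ∈ J0 := by
            rcases mem_insert.1 hk with h | h
            · exact absurd h.symm hkj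
            · exact h
          rw [if_neg hkj]
          simp only [Pi.sub_apply, Finset.sum_apply, Pi.smul_apply, smul_eq_mul]
          rw [Finset.sum_eq_single k
            (fun m hm hmk => by rw [hw0 m hm k hkJ0, if_neg hmk, mul_zero])
            (fun h => absurd hkJ0 h)]
          rw [hw0 k hkJ0 k hkJ0, if_pos rfl, mul_one, sub_self]
      · have hjJ0 : j ∈ J0 := by
          rcases mem_insert.1 hj with h | h
          · exact absurd h hjj
          · exact h
        rw [if_neg hjj]
        rcases mem_insert.1 hk with rfl | hkJ0
        · rw [hw0j₁ j hjJ0, if_neg hjj]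
        · exact hw0 j hjJ0 k hkJ0

lemma exists_support_vector (W : Submodule K (ι → K)) (d : ℕ) (hd : d ≤ Module.finrank K W) :
    ∃ v ∈ W, ∃ J : Finset ι, J.card = d ∧ ∀ j ∈ J, v j = 1 := by
  obtain ⟨J, w, hJcard, hwmem, hw⟩ := exists_pivots d W hd
  refine ⟨∑ j ∈ J, w j, W.sum_mem fun j hj => hwmem j hj, J, hJcard, fun k hk => ?_⟩
  rw [Finset.sum_apply]
  rw [Finset.sum_congr rfl (fun j hj => hw j hj k hk), Finset.sum_ite_eq' J k (fun _ => (1:K))]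
  simp [hk]

end pivot



section rank
variable {K : Type*} [Field K] {ι : Type*} [Fintype ι] [DecidableEq ι]

lemma matrix_rank_add_le (A B : Matrix ι ι K) : (A + B).rank ≤ A.rank + B.rank := by
  rw [Matrix.rank, Matrix.rank, Matrix.rank, Matrix.mulVecLin_add]
  have hle : LinearMap.range (A.mulVecLin + B.mulVecLin) ≤
      LinearMap.range A.mulVecLin ⊔ LinearMap.range B.mulVecLin := by
    rintro x ⟨y, rfl⟩
    exact Submodule.mem_sup.2 ⟨A.mulVecLin y, ⟨y, rfl⟩, B.mulVecLin y, ⟨y, rfl⟩, rfl⟩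
  exact (Submodule.finrank_mono hle).trans
    (Submodule.finrank_add_le_finrank_add_finrank _ _)

lemma matrix_rank_sum_le {α : Type*} (s : Finset α) (f : α → Matrix ι ι K) :
    (∑ a ∈ s, f a).rank ≤ ∑ a ∈ s, (f a).rank := by
  classical
  induction s using Finset.induction with
  | empty => simp
  | insert _ _ h ih =>
    rw [Finset.sum_insert h, Finset.sum_insert h]
    exact (matrix_rank_add_le _ _).trans (by omega)

lemma matrix_rank_outer_le_one (p q : ι → K) :
    (Matrix.of fun x y => p x * q y).rank ≤ 1 := by
  have : (Matrix.of fun x y => p x * q y) = (Matrix.replicateCol Unit p) * (Matrix.replicateRow Unit q) := by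
    ext x y
    simp [Matrix.mul_apply]
  rw [this]
  exact (Matrix.rank_mul_le_left _ _).trans
    ((Matrix.rank_le_card_width _).trans (by simp))

/-- Slice-rank bound for diagonal tensors. -/
lemma slice_rank_diag {αa αb αc : Type*} (A : Finset αa) (B : Finset αb) (C : Finset αc)
    (p : αa → ι → K) (q : αa → ι → ι → K) (r : αb → ι → K) (s : αb → ι → ι → K)
    (u : αc → ι → K) (v : αc → ι → ι → K)
    (hF : ∀ x y z : ι,
      (∑ a ∈ A, p a x * q a y z) + (∑ b ∈ B, r b y * s b x z) + (∑ c ∈ C, u c z * v c x y)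
        = if x = y ∧ y = z then 1 else 0) :
    Fintype.card ι ≤ A.card + B.card + C.card := by
  classical
  by_contra hcard
  push_neg at hcard
  set Φ : (ι → K) →ₗ[K] (↥C → K) :=
    LinearMap.pi (fun c : ↥C => ∑ z : ι, u (c : αc) z • LinearMap.proj z) with hΦdef
  have hker : Fintype.card ι ≤ C.card + Module.finrank K (LinearMap.ker Φ) := by
    have h1 : Module.finrank K (LinearMap.range Φ) + Module.finrank K (LinearMap.ker Φ)
        = Module.finrank K (ι → K) := LinearMap.finrank_range_add_finrank_ker Φ
    have h2 : Module.finrank K (LinearMap.range Φ) ≤ C.card := by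
      have := Submodule.finrank_le (LinearMap.range Φ)
      rwa [Module.finrank_pi, Fintype.card_coe] at this
    rw [Module.finrank_pi] at h1
    omega
  have hd : A.card + B.card + 1 ≤ Module.finrank K (LinearMap.ker Φ) := by omega
  obtain ⟨h, hhW, J, hJcard, hhJ⟩ := exists_support_vector (LinearMap.ker Φ) _ hd
  have hΦh : ∀ c ∈ C, ∑ z : ι, u c z * h z = 0 := by
    intro c hc
    have := congrFun (LinearMap.mem_ker.1 hhW) ⟨c, hc⟩
    simpa [hΦdef, LinearMap.pi_apply, mul_comm] using this
  have hdiag : (Matrix.diagonal h : Matrix ι ι K)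
      = (∑ a ∈ A, Matrix.of fun x y => p a x * (∑ z : ι, q a y z * h z))
        + (∑ b ∈ B, Matrix.of fun x y => (∑ z : ι, s b x z * h z) * r b y) := by
    ext x y
    have key : Matrix.diagonal h x y = ∑ z : ι, ((∑ a ∈ A, p a x * q a y z)
        + (∑ b ∈ B, r b y * s b x z) + (∑ c ∈ C, u c z * v c x y)) * h z := by
      rw [Finset.sum_congr rfl (fun z _ => by rw [hF x y z])]
      by_cases hxy : x = y
      · subst hxy
        simp only [true_and, Matrix.diagonal_apply_eq]
        rw [Finset.sum_congr rfl (fun z _ => by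
          rw [show (if x = z then (1:K) else 0) * h z = if x = z then h z else 0 by
            split <;> simp]),
          Finset.sum_ite_eq (Finset.univ : Finset ι) x h]
        simp
      · rw [Matrix.diagonal_apply_ne _ hxy, Finset.sum_eq_zero]
        intro z _
        rw [if_neg (fun hc => hxy hc.1), zero_mul]
    have T1 : ∑ z : ι, (∑ a ∈ A, p a x * q a y z) * h z
        = ∑ a ∈ A, p a x * (∑ z : ι, q a y z * h z) := by
      simp_rw [Finset.sum_mul, Finset.mul_sum]
      rw [Finset.sum_comm]
      exact Finset.sum_congr rfl fun z _ => Finset.sum_congr rfl fun a _ => by ring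
    have T2 : ∑ z : ι, (∑ b ∈ B, r b y * s b x z) * h z
        = ∑ b ∈ B, (∑ z : ι, s b x z * h z) * r b y := by
      simp_rw [Finset.sum_mul]
      rw [Finset.sum_comm]
      exact Finset.sum_congr rfl fun z _ => Finset.sum_congr rfl fun b _ => by ring
    have T3 : ∑ z : ι, (∑ c ∈ C, u c z * v c x y) * h z = 0 := by
      simp_rw [Finset.sum_mul]
      rw [Finset.sum_comm, Finset.sum_eq_zero]
      intro c hc
      have : ∑ z : ι, u c z * v c x y * h z = (∑ z : ι, u c z * h z) * v c x y := by
        rw [Finset.sum_mul]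
        exact Finset.sum_congr rfl fun z _ => by ring
      rw [this, hΦh c hc, zero_mul]
    rw [key]
    simp only [add_mul]
    rw [Finset.sum_add_distrib, Finset.sum_add_distrib, T1, T2, T3, add_zero]
    simp [Matrix.sum_apply]
  have hrank1 : A.card + B.card + 1 ≤ (Matrix.diagonal h).rank := by
    rw [Matrix.rank_diagonal]
    rw [Fintype.card_subtype]
    refine le_trans ?_ (Finset.card_le_card (fun j hj => Finset.mem_filter.2
      ⟨Finset.mem_univ j, by rw [hhJ j hj]; exact one_ne_zero⟩))
    omega
  have hrank2 : (Matrix.diagonal h).rank ≤ A.card + B.card := by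
    rw [hdiag]
    refine (matrix_rank_add_le _ _).trans (add_le_add
      ((matrix_rank_sum_le _ _).trans ?_) ((matrix_rank_sum_le _ _).trans ?_))
    · calc ∑ a ∈ A, (Matrix.of fun x y => p a x * (∑ z : ι, q a y z * h z)).rank
          ≤ ∑ _a ∈ A, 1 := Finset.sum_le_sum fun a _ => matrix_rank_outer_le_one _ _
        _ = A.card := by simp
    · calc ∑ b ∈ B, (Matrix.of fun x y => (∑ z : ι, s b x z * h z) * r b y).rank
          ≤ ∑ _b ∈ B, 1 := Finset.sum_le_sum fun b _ =>
            (by simpa [mul_comm] using matrix_rank_outer_le_one (fun x => ∑ z : ι, s b x z * h z) (r b))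
        _ = B.card := by simp
  omega

end rank



namespace CapAux

/-- coefficient of the expansion of `1 - (u+v+w)^2` over `ZMod 3`. -/
def coef (t : Fin 3 × Fin 3 × Fin 3) : ZMod 3 :=
  match t with
  | (0, 0, 0) => 1
  | (2, 0, 0) => 2
  | (0, 2, 0) => 2
  | (0, 0, 2) => 2
  | (1, 1, 0) => 1
  | (1, 0, 1) => 1
  | (0, 1, 1) => 1
  | _ => 0

lemma coef_spec (u v w : ZMod 3) :
    (∑ t : Fin 3 × Fin 3 × Fin 3,
      coef t * u ^ (t.1 : ℕ) * v ^ (t.2.1 : ℕ) * w ^ (t.2.2 : ℕ)) = 1 - (u + v + w) ^ 2 := by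
  revert u v w
  decide

lemma coef_deg (t : Fin 3 × Fin 3 × Fin 3) (h : coef t ≠ 0) :
    (t.1 : ℕ) + (t.2.1 : ℕ) + (t.2.2 : ℕ) ≤ 2 := by
  revert h
  revert t
  decide

lemma one_sub_sq (w : ZMod 3) : 1 - w ^ 2 = if w = 0 then 1 else 0 := by
  revert w
  decide

end CapAux

namespace CapAux

variable {n : ℕ}

def mon (e : Fin n → Fin 3) (x : Fin n → ZMod 3) : ZMod 3 := ∏ i, x i ^ ((e i : ℕ))

def deg (e : Fin n → Fin 3) : ℕ := ∑ i, (e i : ℕ)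

def CC (γ : Fin n → Fin 3 × Fin 3 × Fin 3) : ZMod 3 := ∏ i, coef (γ i)

def e1 (γ : Fin n → Fin 3 × Fin 3 × Fin 3) : Fin n → Fin 3 := fun i => (γ i).1
def e2 (γ : Fin n → Fin 3 × Fin 3 × Fin 3) : Fin n → Fin 3 := fun i => (γ i).2.1
def e3 (γ : Fin n → Fin 3 × Fin 3 × Fin 3) : Fin n → Fin 3 := fun i => (γ i).2.2

lemma F_expand (x y z : Fin n → ZMod 3) :
    ∏ i, (1 - (x i + y i + z i) ^ 2)
      = ∑ γ : Fin n → Fin 3 × Fin 3 × Fin 3,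
          CC γ * mon (e1 γ) x * mon (e2 γ) y * mon (e3 γ) z := by
  calc ∏ i, (1 - (x i + y i + z i) ^ 2)
      = ∏ i, ∑ t : Fin 3 × Fin 3 × Fin 3,
          coef t * x i ^ (t.1 : ℕ) * y i ^ (t.2.1 : ℕ) * z i ^ (t.2.2 : ℕ) :=
        Finset.prod_congr rfl fun i _ => (coef_spec (x i) (y i) (z i)).symm
    _ = ∑ γ ∈ Fintype.piFinset (fun _ : Fin n => (Finset.univ : Finset (Fin 3 × Fin 3 × Fin 3))),
          ∏ i, (coef (γ i) * x i ^ ((γ i).1 : ℕ) * y i ^ ((γ i).2.1 : ℕ)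
            * z i ^ ((γ i).2.2 : ℕ)) := Finset.prod_univ_sum _ _
    _ = ∑ γ : Fin n → Fin 3 × Fin 3 × Fin 3,
          CC γ * mon (e1 γ) x * mon (e2 γ) y * mon (e3 γ) z := by
        rw [Fintype.piFinset_univ]
        refine Finset.sum_congr rfl fun γ _ => ?_
        simp only [CC, mon, e1, e2, e3, ← Finset.prod_mul_distrib]

lemma F_delta (x y z : Fin n → ZMod 3) :
    ∏ i, (1 - (x i + y i + z i) ^ 2) = if x + y + z = 0 then 1 else 0 := by
  rw [Finset.prod_congr rfl fun i (_ : i ∈ Finset.univ) => one_sub_sq (x i + y i + z i)]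
  by_cases h : x + y + z = 0
  · rw [if_pos h, Finset.prod_eq_one]
    intro i _
    rw [if_pos (by rw [← Pi.add_apply, ← Pi.add_apply, h, Pi.zero_apply])]
  · rw [if_neg h]
    obtain ⟨i, hi⟩ := Function.ne_iff.1 h
    exact Finset.prod_eq_zero (Finset.mem_univ i)
      (by rw [if_neg (by simpa using hi)])

lemma CC_deg {γ : Fin n → Fin 3 × Fin 3 × Fin 3} (h : CC γ ≠ 0) :
    deg (e1 γ) + deg (e2 γ) + deg (e3 γ) ≤ 2 * n := by
  have hcoef : ∀ i, coef (γ i) ≠ 0 := by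
    intro i
    exact Finset.prod_ne_zero_iff.1 h i (Finset.mem_univ i)
  have : ∀ i : Fin n, ((γ i).1 : ℕ) + ((γ i).2.1 : ℕ) + ((γ i).2.2 : ℕ) ≤ 2 :=
    fun i => coef_deg _ (hcoef i)
  calc deg (e1 γ) + deg (e2 γ) + deg (e3 γ)
      = ∑ i : Fin n, (((γ i).1 : ℕ) + ((γ i).2.1 : ℕ) + ((γ i).2.2 : ℕ)) := by
        rw [deg, deg, deg, ← Finset.sum_add_distrib, ← Finset.sum_add_distrib]
        rfl
    _ ≤ ∑ _i : Fin n, 2 := Finset.sum_le_sum fun i _ => this i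
    _ = 2 * n := by simp [mul_comm]

theorem card_le_three_mul (n : ℕ) (S : Finset (Fin n → ZMod 3))
    (hS : ∀ x ∈ S, ∀ y ∈ S, ∀ z ∈ S, x + z = y + y → x = y ∧ y = z) :
    S.card ≤ 3 * (Finset.univ.filter fun e : Fin n → Fin 3 => 3 * deg e ≤ 2 * n).card := by
  classical
  set E := Finset.univ.filter fun e : Fin n → Fin 3 => 3 * deg e ≤ 2 * n with hE
  set c1 : (Fin n → Fin 3 × Fin 3 × Fin 3) → Prop := fun γ => 3 * deg (e1 γ) ≤ 2 * n with hc1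
  set c2 : (Fin n → Fin 3 × Fin 3 × Fin 3) → Prop := fun γ => 3 * deg (e2 γ) ≤ 2 * n with hc2
  set c3 : (Fin n → Fin 3 × Fin 3 × Fin 3) → Prop := fun γ => 3 * deg (e3 γ) ≤ 2 * n with hc3
  set Γ1 := Finset.univ.filter c1 with hΓ1
  set Γ2 := Finset.univ.filter (fun γ => ¬ c1 γ ∧ c2 γ) with hΓ2
  set Γ3 := Finset.univ.filter (fun γ => ¬ c1 γ ∧ ¬ c2 γ ∧ c3 γ) with hΓ3
  -- the split of the full sum
  have hsplit : ∀ f : (Fin n → Fin 3 × Fin 3 × Fin 3) → ZMod 3,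
      (∀ γ, CC γ = 0 → f γ = 0) →
      (∑ γ : Fin n → Fin 3 × Fin 3 × Fin 3, f γ)
        = (∑ γ ∈ Γ1, f γ) + (∑ γ ∈ Γ2, f γ) + (∑ γ ∈ Γ3, f γ) := by
    intro f hf
    have h0 : ∑ γ ∈ Finset.univ.filter (fun γ => ¬ c1 γ ∧ ¬ c2 γ ∧ ¬ c3 γ), f γ = 0 := by
      refine Finset.sum_eq_zero fun γ hγ => ?_
      obtain ⟨h1', h2', h3'⟩ := (Finset.mem_filter.1 hγ).2
      refine hf γ ?_
      by_contra hCC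
      have := CC_deg hCC
      simp only [hc1, hc2, hc3, not_le] at h1' h2' h3'
      omega
    rw [← Finset.sum_filter_add_sum_filter_not Finset.univ c1 f, add_assoc]
    congr 1
    rw [← Finset.sum_filter_add_sum_filter_not (Finset.univ.filter fun γ => ¬ c1 γ) c2 f,
      Finset.filter_filter, Finset.filter_filter]
    congr 1
    rw [← Finset.sum_filter_add_sum_filter_not
      (Finset.univ.filter fun γ => ¬ c1 γ ∧ ¬ c2 γ) c3 f,
      Finset.filter_filter, Finset.filter_filter]
    have hset1 : Finset.univ.filter (fun a => (¬ c1 a ∧ ¬ c2 a) ∧ ¬ c3 a)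
        = Finset.univ.filter (fun γ => ¬ c1 γ ∧ ¬ c2 γ ∧ ¬ c3 γ) := by
      ext γ; simp [and_assoc]
    have hset2 : Finset.univ.filter (fun a => (¬ c1 a ∧ ¬ c2 a) ∧ c3 a) = Γ3 := by
      rw [hΓ3]; ext γ; simp [and_assoc]
    rw [hset1, hset2, h0, add_zero]
  -- regrouped sums
  have hfib1 : ∀ x y z : Fin n → ZMod 3,
      (∑ e ∈ E, mon e x * (∑ γ ∈ Γ1.filter (fun γ => e1 γ = e),
          CC γ * mon (e2 γ) y * mon (e3 γ) z))
        = ∑ γ ∈ Γ1, CC γ * mon (e1 γ) x * mon (e2 γ) y * mon (e3 γ) z := by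
    intro x y z
    rw [← Finset.sum_fiberwise_of_maps_to (g := e1) (t := E)
      (fun γ hγ => Finset.mem_filter.2 ⟨Finset.mem_univ _, (Finset.mem_filter.1 hγ).2⟩)]
    refine Finset.sum_congr rfl fun e _ => ?_
    rw [Finset.mul_sum]
    refine Finset.sum_congr rfl fun γ hγ => ?_
    rw [(Finset.mem_filter.1 hγ).2]
    ring
  have hfib2 : ∀ x y z : Fin n → ZMod 3,
      (∑ e ∈ E, mon e y * (∑ γ ∈ Γ2.filter (fun γ => e2 γ = e),
          CC γ * mon (e1 γ) x * mon (e3 γ) z))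
        = ∑ γ ∈ Γ2, CC γ * mon (e1 γ) x * mon (e2 γ) y * mon (e3 γ) z := by
    intro x y z
    rw [← Finset.sum_fiberwise_of_maps_to (g := e2) (t := E)
      (fun γ hγ => Finset.mem_filter.2 ⟨Finset.mem_univ _, (Finset.mem_filter.1 hγ).2.2⟩)]
    refine Finset.sum_congr rfl fun e _ => ?_
    rw [Finset.mul_sum]
    refine Finset.sum_congr rfl fun γ hγ => ?_
    rw [(Finset.mem_filter.1 hγ).2]
    ring
  have hfib3 : ∀ x y z : Fin n → ZMod 3,
      (∑ e ∈ E, mon e z * (∑ γ ∈ Γ3.filter (fun γ => e3 γ = e),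
          CC γ * mon (e1 γ) x * mon (e2 γ) y))
        = ∑ γ ∈ Γ3, CC γ * mon (e1 γ) x * mon (e2 γ) y * mon (e3 γ) z := by
    intro x y z
    rw [← Finset.sum_fiberwise_of_maps_to (g := e3) (t := E)
      (fun γ hγ => Finset.mem_filter.2 ⟨Finset.mem_univ _, (Finset.mem_filter.1 hγ).2.2.2⟩)]
    refine Finset.sum_congr rfl fun e _ => ?_
    rw [Finset.mul_sum]
    refine Finset.sum_congr rfl fun γ hγ => ?_
    rw [(Finset.mem_filter.1 hγ).2]
    ring
  have main := slice_rank_diag (ι := ↥S) E E E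
    (fun e x => mon e ↑x)
    (fun e y z => ∑ γ ∈ Γ1.filter (fun γ => e1 γ = e), CC γ * mon (e2 γ) ↑y * mon (e3 γ) ↑z)
    (fun e y => mon e ↑y)
    (fun e x z => ∑ γ ∈ Γ2.filter (fun γ => e2 γ = e), CC γ * mon (e1 γ) ↑x * mon (e3 γ) ↑z)
    (fun e z => mon e ↑z)
    (fun e x y => ∑ γ ∈ Γ3.filter (fun γ => e3 γ = e), CC γ * mon (e1 γ) ↑x * mon (e2 γ) ↑y)
    ?_
  · rw [Fintype.card_coe] at main
    omega
  · rintro ⟨x, hx⟩ ⟨y, hy⟩ ⟨z, hz⟩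
    have lhs : (∑ e ∈ E, mon e x * (∑ γ ∈ Γ1.filter (fun γ => e1 γ = e),
          CC γ * mon (e2 γ) y * mon (e3 γ) z))
        + (∑ e ∈ E, mon e y * (∑ γ ∈ Γ2.filter (fun γ => e2 γ = e),
          CC γ * mon (e1 γ) x * mon (e3 γ) z))
        + (∑ e ∈ E, mon e z * (∑ γ ∈ Γ3.filter (fun γ => e3 γ = e),
          CC γ * mon (e1 γ) x * mon (e2 γ) y))
        = ∏ i, (1 - (x i + y i + z i) ^ 2) := by
      rw [hfib1, hfib2, hfib3, F_expand, hsplit]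
      intro γ hγ
      rw [hγ, zero_mul, zero_mul, zero_mul]
    rw [lhs, F_delta]
    have hiff : x + y + z = 0 ↔ x = y ∧ y = z := by
      constructor
      · intro h
        refine hS x hx y hy z hz ?_
        have key : ∀ a b c : ZMod 3, a + b + c = 0 → a + c = b + b := by decide
        ext i
        exact key _ _ _ (congrFun h i)
      · rintro ⟨rfl, rfl⟩
        have key : ∀ a : ZMod 3, a + a + a = 0 := by decide
        ext i
        exact key (x i)
    simp only [hiff]
    congr 1
    simp [Subtype.ext_iff]

end CapAux



namespace CapAux


variable {n : ℕ}

def cnt (e : Fin n → Fin 3) : ℕ × ℕ × ℕ :=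
  ((Finset.univ.filter fun i => e i = 0).card,
   (Finset.univ.filter fun i => e i = 1).card,
   (Finset.univ.filter fun i => e i = 2).card)

lemma cnt_sum (e : Fin n → Fin 3) : (cnt e).1 + (cnt e).2.1 + (cnt e).2.2 = n := by
  have := Finset.card_eq_sum_card_fiberwise
    (f := fun i => e i) (s := Finset.univ) (t := Finset.univ)
    (fun i _ => Finset.mem_univ (e i))
  rw [Finset.card_univ, Fintype.card_fin] at this
  simp only [cnt]
  conv_rhs => rw [this]
  rw [Fin.sum_univ_three]

lemma deg_cnt (e : Fin n → Fin 3) : deg e = (cnt e).2.1 + 2 * (cnt e).2.2 := by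
  have h := Finset.sum_fiberwise_of_maps_to
    (g := fun i => e i) (s := Finset.univ) (t := Finset.univ)
    (fun i _ => Finset.mem_univ (e i)) (fun i => (e i : ℕ))
  have h2 : ∀ j : Fin 3, (∑ i ∈ Finset.univ.filter fun i => e i = j, (e i : ℕ))
      = (Finset.univ.filter fun i => e i = j).card * (j : ℕ) := by
    intro j
    rw [Finset.sum_congr rfl (fun i hi => by rw [(Finset.mem_filter.1 hi).2]),
      Finset.sum_const, smul_eq_mul]
  rw [deg, ← h, Fin.sum_univ_three, h2, h2, h2, cnt]
  simp
  ring

lemma count_fiber (a b c : ℕ) (habc : a + b + c = n) :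
    (Finset.univ.filter fun e : Fin n → Fin 3 => cnt e = (a, b, c)).card
      = n.choose b * (n - b).choose c := by
  classical
  have hval : ∀ v : Fin 3, (if v = 1 then (1 : Fin 3) else if v = 2 then 2 else 0) = v := by
    decide
  -- bijection with pairs of disjoint subsets
  set P := ((Finset.univ.powersetCard b ×ˢ Finset.univ.powersetCard c :
      Finset (Finset (Fin n) × Finset (Fin n)))).filter
      (fun p => Disjoint p.1 p.2) with hP
  have hbij : (Finset.univ.filter fun e : Fin n → Fin 3 => cnt e = (a, b, c)).card = P.card := by
    refine Finset.card_nbij'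
      (i := fun e => ((Finset.univ.filter fun i => e i = 1),
        (Finset.univ.filter fun i => e i = 2)))
      (j := fun p => fun i => if i ∈ p.1 then 1 else if i ∈ p.2 then 2 else 0)
      ?_ ?_ ?_ ?_
    · intro e he
      obtain ⟨-, hcnt⟩ := Finset.mem_filter.1 he
      rw [cnt, Prod.mk.injEq, Prod.mk.injEq] at hcnt
      rw [hP, Finset.mem_coe, Finset.mem_filter, Finset.mem_product]
      refine ⟨⟨Finset.mem_powersetCard.2 ⟨Finset.subset_univ _, hcnt.2.1⟩,
        Finset.mem_powersetCard.2 ⟨Finset.subset_univ _, hcnt.2.2⟩⟩, ?_⟩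
      rw [Finset.disjoint_left]
      intro i h1 h2
      have e1 := (Finset.mem_filter.1 h1).2
      have e2 := (Finset.mem_filter.1 h2).2
      rw [e1] at e2
      exact absurd e2 (by decide)
    · intro p hp
      rw [hP, Finset.mem_coe, Finset.mem_filter, Finset.mem_product] at hp
      obtain ⟨⟨hp1, hp2⟩, hdisj⟩ := hp
      obtain ⟨hs1, hc1⟩ := Finset.mem_powersetCard.1 hp1
      obtain ⟨hs2, hc2⟩ := Finset.mem_powersetCard.1 hp2
      rw [Finset.mem_coe, Finset.mem_filter]
      refine ⟨Finset.mem_univ _, ?_⟩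
      have hf1 : (Finset.univ.filter fun i =>
          (if i ∈ p.1 then (1:Fin 3) else if i ∈ p.2 then 2 else 0) = 1) = p.1 := by
        ext i
        by_cases h1 : i ∈ p.1 <;> by_cases h2 : i ∈ p.2 <;>
          simp [h1, h2] <;> decide
      have hf2 : (Finset.univ.filter fun i =>
          (if i ∈ p.1 then (1:Fin 3) else if i ∈ p.2 then 2 else 0) = 2) = p.2 := by
        ext i
        by_cases h1 : i ∈ p.1 <;> by_cases h2 : i ∈ p.2
        · exact absurd (Finset.disjoint_left.1 hdisj h1) (fun h => h h2)
        all_goals simp [h1, h2] <;> decide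
      have hf0 : (Finset.univ.filter fun i =>
          (if i ∈ p.1 then (1:Fin 3) else if i ∈ p.2 then 2 else 0) = 0)
            = (p.1 ∪ p.2)ᶜ := by
        ext i
        by_cases h1 : i ∈ p.1 <;> by_cases h2 : i ∈ p.2 <;>
          simp [h1, h2] <;> decide
      rw [cnt, hf1, hf2, hf0, Prod.mk.injEq, Prod.mk.injEq]
      refine ⟨?_, hc1, hc2⟩
      rw [Finset.card_compl, Finset.card_union_of_disjoint hdisj, hc1, hc2,
        Fintype.card_fin]
      omega
    · intro e he
      funext i
      by_cases h1 : e i = 1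
      · simp [h1]
      · by_cases h2 : e i = 2
        · simp [Finset.mem_filter, h1, h2]
        · have h0 : e i = 0 := by omega
          simp [Finset.mem_filter, h1, h2, h0]
    · intro p hp
      rw [hP, Finset.mem_coe, Finset.mem_filter, Finset.mem_product] at hp
      obtain ⟨⟨hp1, hp2⟩, hdisj⟩ := hp
      have hf1 : (Finset.univ.filter fun i =>
          (if i ∈ p.1 then (1:Fin 3) else if i ∈ p.2 then 2 else 0) = 1) = p.1 := by
        ext i
        by_cases h1 : i ∈ p.1 <;> by_cases h2 : i ∈ p.2 <;>
          simp [h1, h2] <;> decide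
      have hf2 : (Finset.univ.filter fun i =>
          (if i ∈ p.1 then (1:Fin 3) else if i ∈ p.2 then 2 else 0) = 2) = p.2 := by
        ext i
        by_cases h1 : i ∈ p.1 <;> by_cases h2 : i ∈ p.2
        · exact absurd (Finset.disjoint_left.1 hdisj h1) (fun h => h h2)
        all_goals simp [h1, h2] <;> decide
      dsimp only
      rw [hf1, hf2]
  rw [hbij]
  -- now count P
  have : P.card = ∑ B ∈ Finset.univ.powersetCard b, (P.filter fun p => p.1 = B).card :=
    Finset.card_eq_sum_card_fiberwise (fun p hp => by
      rw [hP, Finset.mem_coe, Finset.mem_filter, Finset.mem_product] at hp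
      exact hp.1.1)
  rw [this]
  have hfib : ∀ B ∈ (Finset.univ : Finset (Fin n)).powersetCard b,
      (P.filter fun p => p.1 = B).card = (n - b).choose c := by
    intro B hB
    obtain ⟨hBs, hBc⟩ := Finset.mem_powersetCard.1 hB
    have : (P.filter fun p => p.1 = B).card = ((Finset.univ \ B).powersetCard c).card := by
      refine Finset.card_nbij' (i := fun p => p.2) (j := fun C => (B, C)) ?_ ?_ ?_ ?_
      · intro p hp
        rw [Finset.mem_coe, Finset.mem_filter, hP, Finset.mem_filter, Finset.mem_product] at hp
        obtain ⟨⟨⟨hp1, hp2⟩, hdisj⟩, hfst⟩ := hp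
        obtain ⟨hs2, hc2⟩ := Finset.mem_powersetCard.1 hp2
        refine Finset.mem_powersetCard.2 ⟨?_, hc2⟩
        intro i hi
        rw [Finset.mem_sdiff]
        exact ⟨Finset.mem_univ _, fun hiB => Finset.disjoint_left.1 hdisj
          (hfst ▸ hiB) hi⟩
      · intro C hC
        obtain ⟨hCs, hCc⟩ := Finset.mem_powersetCard.1 hC
        rw [Finset.mem_coe, Finset.mem_filter, hP, Finset.mem_filter, Finset.mem_product]
        refine ⟨⟨⟨Finset.mem_powersetCard.2 ⟨Finset.subset_univ _, hBc⟩,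
          Finset.mem_powersetCard.2 ⟨Finset.subset_univ _, hCc⟩⟩, ?_⟩, rfl⟩
        rw [Finset.disjoint_left]
        intro i hiB hiC
        exact ((Finset.mem_sdiff.1 (hCs hiC)).2) hiB
      · intro p hp
        rw [Finset.mem_coe, Finset.mem_filter] at hp
        rw [← hp.2]
      · intro C hC
        rfl
    rw [this, Finset.card_powersetCard, Finset.card_sdiff_of_subset hBs, Finset.card_univ,
      Fintype.card_fin, hBc]
  rw [Finset.sum_congr rfl hfib, Finset.sum_const, Finset.card_powersetCard,
    Finset.card_univ, Fintype.card_fin, smul_eq_mul]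

lemma multinomial_eq (a b c : ℕ) (habc : a + b + c = n) :
    n.factorial / (a.factorial * b.factorial * c.factorial)
      = n.choose b * (n - b).choose c := by
  have hb : b ≤ n := by omega
  have hc : c ≤ n - b := by omega
  have h1 : n.choose b * b.factorial * (n - b).factorial = n.factorial :=
    Nat.choose_mul_factorial_mul_factorial hb
  have h2 : (n - b).choose c * c.factorial * (n - b - c).factorial = (n - b).factorial :=
    Nat.choose_mul_factorial_mul_factorial hc
  have ha : n - b - c = a := by omega
  rw [ha] at h2
  have key : n.factorial = n.choose b * (n - b).choose c
      * (a.factorial * b.factorial * c.factorial) := by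
    rw [← h1, ← h2]
    ring
  rw [key]
  rw [Nat.mul_div_cancel]
  positivity

lemma count_E (n : ℕ) :
    (Finset.univ.filter fun e : Fin n → Fin 3 => 3 * deg e ≤ 2 * n).card
      = ∑ t ∈ (Finset.range (n + 1) ×ˢ Finset.range (n + 1) ×ˢ
              Finset.range (n + 1)).filter
            (fun t => t.1 + t.2.1 + t.2.2 = n ∧ 3 * (t.2.1 + 2 * t.2.2) ≤ 2 * n),
          n.factorial / (t.1.factorial * t.2.1.factorial * t.2.2.factorial) := by
  classical
  rw [Finset.card_eq_sum_card_fiberwise (f := cnt)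
    (t := (Finset.range (n + 1) ×ˢ Finset.range (n + 1) ×ˢ Finset.range (n + 1)).filter
      (fun t => t.1 + t.2.1 + t.2.2 = n ∧ 3 * (t.2.1 + 2 * t.2.2) ≤ 2 * n)) ?_]
  · refine Finset.sum_congr rfl fun t ht => ?_
    obtain ⟨-, hsum, hdeg⟩ := Finset.mem_filter.1 ht
    have hfix : ((Finset.univ.filter fun e : Fin n → Fin 3 => 3 * deg e ≤ 2 * n).filter
        fun e => cnt e = t) = Finset.univ.filter fun e => cnt e = t := by
      ext e
      simp only [Finset.mem_filter, Finset.mem_univ, true_and]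
      constructor
      · rintro ⟨-, h⟩; exact h
      · intro h
        refine ⟨?_, h⟩
        rw [deg_cnt, h]
        exact hdeg
    rw [hfix]
    obtain ⟨a, b, c⟩ := t
    rw [count_fiber a b c hsum, multinomial_eq a b c hsum]
  · intro e he
    have hdeg := (Finset.mem_filter.1 he).2
    rw [Finset.mem_coe, Finset.mem_filter, Finset.mem_product, Finset.mem_product]
    have h1 := cnt_sum e
    have h2 := deg_cnt e
    refine ⟨⟨Finset.mem_range.2 (by omega), Finset.mem_range.2 (by omega),
      Finset.mem_range.2 (by omega)⟩, by omega, by omega⟩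

end CapAux



namespace CapAux


lemma E_card_bound (n : ℕ) :
    ((Finset.univ.filter fun e : Fin n → Fin 3 => 3 * deg e ≤ 2 * n).card : ℝ)
      ≤ ((2 : ℝ) ^ ((2 : ℝ)/3) * (7/4)) ^ n := by
  set E := Finset.univ.filter fun e : Fin n → Fin 3 => 3 * deg e ≤ 2 * n with hE
  have step1 : (E.card : ℝ) ≤ ∑ e ∈ E, (2:ℝ) ^ ((2:ℝ) * n / 3) * (1/2) ^ (deg e) := by
    rw [Finset.card_eq_sum_ones E]
    push_cast
    refine Finset.sum_le_sum fun e he => ?_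
    have hdeg : 3 * deg e ≤ 2 * n := (Finset.mem_filter.1 he).2
    have h1 : ((1:ℝ)/2) ^ (deg e) = (2:ℝ) ^ (-(deg e : ℝ)) := by
      rw [one_div, inv_pow, ← Real.rpow_natCast (2:ℝ) (deg e),
        ← Real.rpow_neg (by norm_num)]
    rw [h1, ← Real.rpow_add (by norm_num)]
    have : (0:ℝ) ≤ (2:ℝ) * n / 3 + -(deg e : ℝ) := by
      have : (deg e : ℝ) ≤ 2 * n / 3 := by
        rw [le_div_iff₀ (by norm_num)]
        have := (Nat.cast_le (α := ℝ)).2 hdeg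
        push_cast at this ⊢
        linarith
      linarith
    calc (1:ℝ) = (2:ℝ) ^ (0:ℝ) := by rw [Real.rpow_zero]
      _ ≤ (2:ℝ) ^ ((2:ℝ) * n / 3 + -(deg e : ℝ)) :=
        Real.rpow_le_rpow_of_exponent_le (by norm_num) this
  have step2 : ∑ e ∈ E, (2:ℝ) ^ ((2:ℝ) * n / 3) * (1/2) ^ (deg e)
      ≤ ∑ e : Fin n → Fin 3, (2:ℝ) ^ ((2:ℝ) * n / 3) * (1/2) ^ (deg e) := by
    refine Finset.sum_le_sum_of_subset_of_nonneg (Finset.filter_subset _ _) ?_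
    intro e _ _
    positivity
  have step3 : ∑ e : Fin n → Fin 3, (2:ℝ) ^ ((2:ℝ) * n / 3) * (1/2) ^ (deg e)
      = (2:ℝ) ^ ((2:ℝ) * n / 3) * (7/4) ^ n := by
    rw [← Finset.mul_sum]
    congr 1
    have : ∀ e : Fin n → Fin 3, ((1:ℝ)/2) ^ (deg e) = ∏ i, ((1:ℝ)/2) ^ ((e i : ℕ)) := by
      intro e
      rw [deg, ← Finset.prod_pow_eq_pow_sum]
    rw [Finset.sum_congr rfl fun e _ => this e]
    have hps := Finset.prod_univ_sum (fun _ : Fin n => (Finset.univ : Finset (Fin 3)))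
      (fun _ j => ((1:ℝ)/2) ^ (j : ℕ))
    rw [Fintype.piFinset_univ] at hps
    rw [← hps]
    have : ∀ i : Fin n, ∑ j : Fin 3, ((1:ℝ)/2) ^ (j : ℕ) = 7/4 := by
      intro i
      rw [Fin.sum_univ_three]
      norm_num
    rw [Finset.prod_congr rfl fun i _ => this i, Finset.prod_const, Finset.card_univ,
      Fintype.card_fin]
  have step4 : (2:ℝ) ^ ((2:ℝ) * n / 3) * (7/4) ^ n = ((2 : ℝ) ^ ((2 : ℝ)/3) * (7/4)) ^ n := by
    rw [mul_pow]
    congr 1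
    rw [← Real.rpow_natCast ((2:ℝ) ^ ((2:ℝ)/3)) n, ← Real.rpow_mul (by norm_num)]
    congr 1
    ring
  linarith [step1, step2, step3.le, step3.ge]

lemma c_lt_three : (2 : ℝ) ^ ((2 : ℝ)/3) * (7/4) < 3 := by
  have h3 : ((2 : ℝ) ^ ((2 : ℝ)/3) * (7/4)) ^ (3:ℕ) = 4 * (343/64) := by
    rw [mul_pow]
    congr 1
    · rw [← Real.rpow_natCast ((2:ℝ) ^ ((2:ℝ)/3)) 3, ← Real.rpow_mul (by norm_num)]
      norm_num
    · norm_num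
  have hpos : (0:ℝ) ≤ (2 : ℝ) ^ ((2 : ℝ)/3) * (7/4) := by positivity
  refine lt_of_pow_lt_pow_left₀ 3 (by norm_num) ?_
  rw [h3]
  norm_num

lemma one_lt_c : (1:ℝ) < (2 : ℝ) ^ ((2 : ℝ)/3) * (7/4) := by
  have : (1:ℝ) ≤ (2 : ℝ) ^ ((2 : ℝ)/3) := by
    rw [show (1:ℝ) = (2:ℝ) ^ (0:ℝ) by rw [Real.rpow_zero]]
    exact Real.rpow_le_rpow_of_exponent_le (by norm_num) (by norm_num)
  nlinarith

end CapAux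

/-- Tao's slice-rank bound for cap sets: a progression-free subset of `𝔽_3^n` has size
at most `3 · ∑ n!/(a!b!c!)` over non-negative `a+b+c = n` with `b+2c ≤ 2n/3`;
consequently `|S| ≤ 3^{κn}` for some `0 < κ < 1` and all large `n`. -/
theorem tao_slice_rank_capset_bound :
    (∀ n : ℕ, 1 ≤ n →
      ∀ S : Finset (Fin n → ZMod 3),
        (∀ x ∈ S, ∀ y ∈ S, ∀ z ∈ S, x + z = y + y → x = y ∧ y = z) →
        S.card ≤ 3 * ∑ t ∈ (Finset.range (n + 1) ×ˢ Finset.range (n + 1) ×ˢ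
              Finset.range (n + 1)).filter
            (fun t => t.1 + t.2.1 + t.2.2 = n ∧ 3 * (t.2.1 + 2 * t.2.2) ≤ 2 * n),
          n.factorial / (t.1.factorial * t.2.1.factorial * t.2.2.factorial)) ∧
    (∃ κ : ℝ, 0 < κ ∧ κ < 1 ∧ ∃ n₀ : ℕ, ∀ n : ℕ, n₀ ≤ n →
      ∀ S : Finset (Fin n → ZMod 3),
        (∀ x ∈ S, ∀ y ∈ S, ∀ z ∈ S, x + z = y + y → x = y ∧ y = z) →
        (S.card : ℝ) ≤ (3 : ℝ) ^ (κ * n)) := by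
  constructor
  · intro n _ S hS
    have h1 := CapAux.card_le_three_mul n S hS
    rwa [CapAux.count_E n] at h1
  · set c : ℝ := (2 : ℝ) ^ ((2 : ℝ)/3) * (7/4) with hc
    have hc1 : (1:ℝ) < c := CapAux.one_lt_c
    have hc3 : c < 3 := CapAux.c_lt_three
    have hc0 : (0:ℝ) < c := by linarith
    have hlogc : 0 < Real.log c := Real.log_pos hc1
    have hlog3 : 0 < Real.log 3 := Real.log_pos (by norm_num)
    have hlt : Real.log c < Real.log 3 := Real.log_lt_log hc0 hc3
    set κ : ℝ := (Real.log c / Real.log 3 + 1)/2 with hκ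
    have hdiv : 0 < Real.log c / Real.log 3 := div_pos hlogc hlog3
    have hdiv1 : Real.log c / Real.log 3 < 1 := (div_lt_one hlog3).2 hlt
    have hκ0 : 0 < κ := by rw [hκ]; linarith
    have hκ1 : κ < 1 := by rw [hκ]; linarith
    have hκval : κ * Real.log 3 = (Real.log c + Real.log 3)/2 := by
      rw [hκ]
      field_simp
    obtain ⟨n₀, hn₀⟩ := exists_nat_ge (Real.log 3 / ((Real.log 3 - Real.log c)/2))
    refine ⟨κ, hκ0, hκ1, n₀, fun n hn S hS => ?_⟩
    have hb := CapAux.card_le_three_mul n S hS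
    have hEb := CapAux.E_card_bound n
    have hmain : (S.card : ℝ) ≤ 3 * c ^ n := by
      have hcast : (S.card : ℝ) ≤ 3 * ((Finset.univ.filter
          fun e : Fin n → Fin 3 => 3 * CapAux.deg e ≤ 2 * n).card : ℝ) := by
        exact_mod_cast hb
      calc (S.card : ℝ) ≤ 3 * ((Finset.univ.filter
            fun e : Fin n → Fin 3 => 3 * CapAux.deg e ≤ 2 * n).card : ℝ) := hcast
        _ ≤ 3 * c ^ n := by rw [hc]; linarith
    refine hmain.trans ?_
    have hpos : (0:ℝ) < 3 * c ^ n := by positivity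
    rw [← Real.log_le_log_iff hpos (Real.rpow_pos_of_pos (by norm_num) _),
      Real.log_mul (by norm_num) (by positivity), Real.log_pow,
      Real.log_rpow (by norm_num)]
    have hd : 0 < (Real.log 3 - Real.log c)/2 := by linarith
    have hnn : (n₀:ℝ) ≤ (n:ℝ) := Nat.cast_le.2 hn
    have h5 : Real.log 3 ≤ (n:ℝ) * ((Real.log 3 - Real.log c)/2) := by
      calc Real.log 3
          = (Real.log 3 / ((Real.log 3 - Real.log c)/2)) * ((Real.log 3 - Real.log c)/2) :=
            (div_mul_cancel₀ _ (ne_of_gt hd)).symm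
        _ ≤ (n:ℝ) * ((Real.log 3 - Real.log c)/2) :=
            mul_le_mul_of_nonneg_right (hn₀.trans hnn) hd.le
    have h6 : κ * (n:ℝ) * Real.log 3 = (n:ℝ) * ((Real.log c + Real.log 3)/2) := by
      rw [mul_comm κ (n:ℝ), mul_assoc, hκval]
    nlinarith [h5, h6]
end

section
/- Let S ⊆ 𝔽_3^n be a set containing no three-term arithmetic progression, and define f : 𝔽_3^n × 𝔽_3^n × 𝔽_3^n → 𝔽_3 by f(x, y, z) = ∏_{i=1}^n (1 − (x_i + y_i + z_i)^2). Then for all x, y, z ∈ S, f(x, y, z) = 1 if x = y = z and f(x, y, z) = 0 otherwise; that is, f restricted to S × S × S is the diagonal map. -/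
lemma zmod3_sq : ∀ t : ZMod 3, (1 - t ^ 2 : ZMod 3) = if t = 0 then 1 else 0 := by
  decide

/-- If `S ⊆ 𝔽_3^n` is progression-free, then the function
`f(x,y,z) = ∏ i, (1 − (xᵢ + yᵢ + zᵢ)²)` restricted to `S × S × S` is the diagonal map:
it is `1` when `x = y = z` and `0` otherwise. -/
theorem capset_polynomial_is_diagonal {n : ℕ} (S : Set (Fin n → ZMod 3))
    (hS : ∀ x ∈ S, ∀ y ∈ S, ∀ z ∈ S, x + z = y + y → x = y ∧ y = z) :
    ∀ x ∈ S, ∀ y ∈ S, ∀ z ∈ S,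
      (∏ i : Fin n, (1 - (x i + y i + z i) ^ 2)) =
        if x = y ∧ y = z then (1 : ZMod 3) else 0 := by
  intro x hx y hy z hz
  by_cases h : ∀ i, x i + y i + z i = 0
  · have hsum : x + z = y + y := by
      funext i
      simp only [Pi.add_apply]
      have h3 : (3 : ZMod 3) = 0 := by decide
      linear_combination h i - (y i) * h3
    have hxyz := hS x hx y hy z hz hsum
    rw [if_pos hxyz]
    apply Finset.prod_eq_one
    intro i _
    rw [zmod3_sq, if_pos (h i)]
  · push_neg at h
    obtain ⟨i, hi⟩ := h
    have hne : ¬ (x = y ∧ y = z) := by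
      rintro ⟨rfl, rfl⟩
      apply hi
      have : (3 : ZMod 3) = 0 := by decide
      linear_combination x i * this
    rw [if_neg hne]
    apply Finset.prod_eq_zero (Finset.mem_univ i)
    rw [zmod3_sq, if_neg hi]
end
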